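/- arXiv:2211.17064 — 10 statements merged into one kernel-verified Lean document; each statement's English description precedes it below -/
import Mathlib

section
/- Let g_S(x) = (π/4)·(sinh(πx/2))^{−2}·(πx·cosh(πx/2)/sinh(πx/2) − 1) for x > 0. Then the function x ↦ x·g_S(x) is nonincreasing on (0, ∞); equivalently, for every x > 0 the derivative of x ↦ −x·g_S(x) at x, which equals (π/8)·(sinh(πx/2))^{−2}·(2π²x²·coth²(πx/2) + π²x²·(sinh(πx/2))^{−2} − 6πx·coth(πx/2) + 2) with coth(u) = cosh(u)/sinh(u), is nonnegative. -/
open Real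

private lemma aux_nonneg {f f' : ℝ → ℝ} (hf : ∀ v, HasDerivAt f (f' v) v)
    (h0 : 0 ≤ f 0) (hf' : ∀ v, 0 ≤ v → 0 ≤ f' v) : ∀ v, 0 ≤ v → 0 ≤ f v := by
  intro v hv
  have hm : MonotoneOn f (Set.Ici 0) :=
    monotoneOn_of_deriv_nonneg (convex_Ici 0)
      (fun x _ => (hf x).continuousAt.continuousWithinAt)
      (fun x _ => (hf x).differentiableAt.differentiableWithinAt)
      (fun x hx => by
        rw [(hf x).deriv]
        exact hf' x (le_of_lt (by simpa using hx)))
  exact h0.trans (hm Set.self_mem_Ici hv hv)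

private lemma aux0 : ∀ v : ℝ, 0 ≤ v → 0 ≤ v * Real.cosh v - Real.sinh v := by
  apply aux_nonneg (f' := fun v => v * Real.sinh v)
  · intro v
    have h := ((hasDerivAt_id v).mul (Real.hasDerivAt_cosh v)).sub (Real.hasDerivAt_sinh v)
    simp only [id_eq] at h
    refine h.congr_deriv ?_
    ring
  · norm_num
  · intro v hv
    exact mul_nonneg hv (Real.sinh_nonneg_iff.2 hv)

private lemma aux3 : ∀ v : ℝ, 0 ≤ v → 0 ≤ (v^2 - 2) * Real.sinh v + 3 * v * Real.cosh v := by
  intro v hv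
  rcases le_or_gt (v^2) 2 with h | h
  · nlinarith [aux0 v hv, Real.cosh_pos v, Real.sinh_nonneg_iff.2 hv]
  · nlinarith [Real.sinh_nonneg_iff.2 hv, Real.cosh_pos v, hv]

private lemma aux2 : ∀ v : ℝ, 0 ≤ v → 0 ≤ v * Real.sinh v + (v^2 - 3) * Real.cosh v + 4 := by
  apply aux_nonneg (f' := fun v => (v^2 - 2) * Real.sinh v + 3 * v * Real.cosh v)
  · intro v
    have h := (((hasDerivAt_id v).mul (Real.hasDerivAt_sinh v)).add
      ((((hasDerivAt_pow 2 v).sub_const 3).mul (Real.hasDerivAt_cosh v)))).add_const 4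
    simp only [id_eq] at h
    refine h.congr_deriv ?_
    push_cast
    ring
  · norm_num
  · exact aux3

private lemma aux1 : ∀ v : ℝ, 0 ≤ v → 0 ≤ (v^2 - 2) * Real.sinh v - v * Real.cosh v + 4 * v := by
  apply aux_nonneg (f' := fun v => v * Real.sinh v + (v^2 - 3) * Real.cosh v + 4)
  · intro v
    have h := ((((hasDerivAt_pow 2 v).sub_const 2).mul (Real.hasDerivAt_sinh v)).sub
      ((hasDerivAt_id v).mul (Real.hasDerivAt_cosh v))).add ((hasDerivAt_id v).const_mul 4)
    simp only [id_eq] at h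
    refine h.congr_deriv ?_
    push_cast
    ring
  · norm_num
  · exact aux2

private lemma auxkey :
    ∀ v : ℝ, 0 ≤ v → 0 ≤ (v^2 + 1) * Real.cosh v - 3 * v * Real.sinh v + 2 * v^2 - 1 := by
  apply aux_nonneg (f' := fun v => (v^2 - 2) * Real.sinh v - v * Real.cosh v + 4 * v)
  · intro v
    have h := (((((hasDerivAt_pow 2 v).add_const 1).mul (Real.hasDerivAt_cosh v)).sub
      (((hasDerivAt_id v).const_mul 3).mul (Real.hasDerivAt_sinh v))).add
      ((hasDerivAt_pow 2 v).const_mul 2)).sub_const 1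
    simp only [id_eq] at h
    refine h.congr_deriv ?_
    push_cast
    ring
  · norm_num
  · exact aux1

/-- for
`g_S(x) = (π/4)·(sinh(πx/2))⁻²·(πx·cosh(πx/2)/sinh(πx/2) − 1)` on `(0,∞)`, the function
`x ↦ x·g_S(x)` is nonincreasing on `(0,∞)`; equivalently, the derivative of
`x ↦ −x·g_S(x)` at every `x > 0` equals
`(π/8)·(sinh(πx/2))⁻²·(2π²x²·coth²(πx/2) + π²x²·(sinh(πx/2))⁻² − 6πx·coth(πx/2) + 2)`
(with `coth u = cosh u / sinh u`), which is nonnegative. -/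
theorem hyperbolic_sine_in_L2
    (gS : ℝ → ℝ)
    (hgS : ∀ x : ℝ, 0 < x → gS x = (π / 4) * (Real.sinh (π * x / 2))⁻¹ ^ 2 *
        (π * x * Real.cosh (π * x / 2) / Real.sinh (π * x / 2) - 1)) :
    AntitoneOn (fun x : ℝ => x * gS x) (Set.Ioi 0) ∧
    ∀ x : ℝ, 0 < x →
      deriv (fun y : ℝ => -(y * gS y)) x
          = (π / 8) * (Real.sinh (π * x / 2))⁻¹ ^ 2 *
              (2 * π ^ 2 * x ^ 2 * (Real.cosh (π * x / 2) / Real.sinh (π * x / 2)) ^ 2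
                + π ^ 2 * x ^ 2 * (Real.sinh (π * x / 2))⁻¹ ^ 2
                - 6 * π * x * (Real.cosh (π * x / 2) / Real.sinh (π * x / 2)) + 2) ∧
      0 ≤ (π / 8) * (Real.sinh (π * x / 2))⁻¹ ^ 2 *
            (2 * π ^ 2 * x ^ 2 * (Real.cosh (π * x / 2) / Real.sinh (π * x / 2)) ^ 2
              + π ^ 2 * x ^ 2 * (Real.sinh (π * x / 2))⁻¹ ^ 2
              - 6 * π * x * (Real.cosh (π * x / 2) / Real.sinh (π * x / 2)) + 2) := by
  have main : ∀ x : ℝ, 0 < x →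
      HasDerivAt (fun y : ℝ => y * gS y)
        (-((π / 8) * (Real.sinh (π * x / 2))⁻¹ ^ 2 *
              (2 * π ^ 2 * x ^ 2 * (Real.cosh (π * x / 2) / Real.sinh (π * x / 2)) ^ 2
                + π ^ 2 * x ^ 2 * (Real.sinh (π * x / 2))⁻¹ ^ 2
                - 6 * π * x * (Real.cosh (π * x / 2) / Real.sinh (π * x / 2)) + 2))) x ∧
      0 ≤ (π / 8) * (Real.sinh (π * x / 2))⁻¹ ^ 2 *
              (2 * π ^ 2 * x ^ 2 * (Real.cosh (π * x / 2) / Real.sinh (π * x / 2)) ^ 2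
                + π ^ 2 * x ^ 2 * (Real.sinh (π * x / 2))⁻¹ ^ 2
                - 6 * π * x * (Real.cosh (π * x / 2) / Real.sinh (π * x / 2)) + 2) := by
    intro x hx
    have hu0 : 0 < π * x / 2 := by positivity
    have hspos : 0 < Real.sinh (π * x / 2) := Real.sinh_pos_iff.2 hu0
    have hsne : Real.sinh (π * x / 2) ≠ 0 := ne_of_gt hspos
    constructor
    · -- derivative computation
      have hu : HasDerivAt (fun y : ℝ => π * y / 2) (π / 2) x := by
        simpa using ((hasDerivAt_id x).const_mul π).div_const 2
      have hs : HasDerivAt (fun y : ℝ => Real.sinh (π * y / 2))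
          (Real.cosh (π * x / 2) * (π / 2)) x := (Real.hasDerivAt_sinh _).comp x hu
      have hc : HasDerivAt (fun y : ℝ => Real.cosh (π * y / 2))
          (Real.sinh (π * x / 2) * (π / 2)) x := (Real.hasDerivAt_cosh _).comp x hu
      have hinv := hs.inv hsne
      have hinv2 := hinv.pow 2
      have hnum : HasDerivAt (fun y : ℝ => π * y * Real.cosh (π * y / 2))
          (π * Real.cosh (π * x / 2) + π * x * (Real.sinh (π * x / 2) * (π / 2))) x := by
        have := ((hasDerivAt_id x).const_mul π).mul hc
        simp only [id_eq, mul_one] at this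
        exact this
      have hq := (hnum.div hs hsne).sub_const 1
      have hprod := (hinv2.const_mul (π / 4)).mul hq
      have hG := (hasDerivAt_id x).mul hprod
      simp only [id_eq] at hG
      have hGexp : HasDerivAt
          (fun y : ℝ => y * (π / 4 * (Real.sinh (π * y / 2))⁻¹ ^ 2 *
            (π * y * Real.cosh (π * y / 2) / Real.sinh (π * y / 2) - 1)))
          (-((π / 8) * (Real.sinh (π * x / 2))⁻¹ ^ 2 *
              (2 * π ^ 2 * x ^ 2 * (Real.cosh (π * x / 2) / Real.sinh (π * x / 2)) ^ 2
                + π ^ 2 * x ^ 2 * (Real.sinh (π * x / 2))⁻¹ ^ 2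
                - 6 * π * x * (Real.cosh (π * x / 2) / Real.sinh (π * x / 2)) + 2))) x := by
        refine hG.congr_deriv (Eq.symm ?_)
        simp only [Pi.mul_apply, Pi.div_apply, Pi.pow_apply, Pi.inv_apply, id_eq]
        have hcsq := Real.cosh_sq (π * x / 2)
        have hss : Real.sinh (π*x/2) * (Real.sinh (π*x/2))⁻¹ = 1 := mul_inv_cancel₀ hsne
        linear_combination (π^3 * x^2 / 8) * (Real.sinh (π*x/2))⁻¹^4 * hcsq
          - (π^2 * x * Real.cosh (π*x/2) / 4) * (Real.sinh (π*x/2))⁻¹^3 * hss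
      apply hGexp.congr_of_eventuallyEq
      filter_upwards [Ioi_mem_nhds hx] with y hy
      rw [hgS y hy]
    · -- nonnegativity
      have hk := auxkey (π * x) (by positivity)
      have h2 : π * x = 2 * (π * x / 2) := by ring
      rw [h2, Real.cosh_two_mul, Real.sinh_two_mul] at hk
      have hA : 0 ≤ 2 * π^2 * x^2 * Real.cosh (π*x/2)^2 + π^2 * x^2
          - 6 * π * x * Real.cosh (π*x/2) * Real.sinh (π*x/2) + 2 * Real.sinh (π*x/2)^2 := by
        nlinarith [Real.cosh_sq (π * x / 2)]
      have hE : (2 * π ^ 2 * x ^ 2 * (Real.cosh (π * x / 2) / Real.sinh (π * x / 2)) ^ 2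
                + π ^ 2 * x ^ 2 * (Real.sinh (π * x / 2))⁻¹ ^ 2
                - 6 * π * x * (Real.cosh (π * x / 2) / Real.sinh (π * x / 2)) + 2)
          = (2 * π^2 * x^2 * Real.cosh (π*x/2)^2 + π^2 * x^2
          - 6 * π * x * Real.cosh (π*x/2) * Real.sinh (π*x/2) + 2 * Real.sinh (π*x/2)^2)
            * ((Real.sinh (π * x / 2))⁻¹)^2 := by
        field_simp
      rw [hE]
      positivity
  constructor
  · apply antitoneOn_of_deriv_nonpos (convex_Ioi 0)
    · intro x hx
      exact (main x hx).1.continuousAt.continuousWithinAt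
    · intro x hx
      rw [interior_Ioi] at hx
      exact (main x hx).1.differentiableAt.differentiableWithinAt
    · intro x hx
      rw [interior_Ioi] at hx
      rw [(main x hx).1.deriv]
      exact neg_nonpos.2 (main x hx).2
  · intro x hx
    refine ⟨?_, (main x hx).2⟩
    have := ((main x hx).1.neg).deriv
    exact this.trans (neg_neg _)
end

section
/- Let k_S(x) = 1/(x·(e^{πx} − 1)) for x > 0, and for a function f on (0,∞) define (Df)(x) := −d/dx (x·f(x)), with Dⁿ its n-fold iterate. Then (D⁴k_S)(0.9) < 0; in particular D⁴k_S is not nonnegative on (0, ∞). -/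
open Real

/-- The operator `D` acting on functions on `(0,∞)`: `(Df)(x) = −d/dx (x·f(x))`. -/
noncomputable def DOp (f : ℝ → ℝ) : ℝ → ℝ := fun x => -deriv (fun y => y * f y) x

noncomputable def F1 (x : ℝ) : ℝ := π * Real.exp (π*x) / (Real.exp (π*x) - 1)^2

noncomputable def F2 (x : ℝ) : ℝ :=
  (π^2*x*((Real.exp (π*x))^2 + Real.exp (π*x)) - π*((Real.exp (π*x))^2 - Real.exp (π*x)))
    / (Real.exp (π*x) - 1)^3

noncomputable def F3 (x : ℝ) : ℝ :=
  (π^3*x^2*((Real.exp (π*x))^3 + 4*(Real.exp (π*x))^2 + Real.exp (π*x))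
    - 3*π^2*x*((Real.exp (π*x))^3 - Real.exp (π*x))
    + π*((Real.exp (π*x))^3 - 2*(Real.exp (π*x))^2 + Real.exp (π*x)))
    / (Real.exp (π*x) - 1)^4

noncomputable def F4 (x : ℝ) : ℝ :=
  (-(π*Real.exp (π*x)*(Real.exp (π*x) - 1)^3)
    + 7*x*π^2*(((Real.exp (π*x))^2 + Real.exp (π*x))*(Real.exp (π*x) - 1)^2)
    - 6*x^2*π^3*(((Real.exp (π*x))^3 + 4*(Real.exp (π*x))^2 + Real.exp (π*x))*(Real.exp (π*x) - 1))
    + x^3*π^4*((Real.exp (π*x))^4 + 11*(Real.exp (π*x))^3 + 11*(Real.exp (π*x))^2 + Real.exp (π*x)))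
    / (Real.exp (π*x) - 1)^5

lemma exp_pi_deriv (x : ℝ) : HasDerivAt (fun y : ℝ => Real.exp (π*y)) (Real.exp (π*x) * (π*1)) x :=
  ((hasDerivAt_id x).const_mul π).exp

lemma den_ne {x : ℝ} (hx : 0 < x) : Real.exp (π*x) - 1 ≠ 0 := by
  have h1 : (1:ℝ) < Real.exp (π*x) := by
    rw [show (1:ℝ) = Real.exp 0 by simp]
    exact Real.exp_lt_exp.mpr (by positivity)
  linarith

lemma hd1 {x : ℝ} (hx : 0 < x) :
    HasDerivAt (fun y : ℝ => (Real.exp (π*y) - 1)⁻¹) (-(F1 x)) x := by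
  have h := (((exp_pi_deriv x).sub_const 1).inv (den_ne hx))
  refine h.congr_deriv ?_
  unfold F1
  ring

lemma hd2 {x : ℝ} (hx : 0 < x) :
    HasDerivAt (fun y : ℝ => y * F1 y) (-(F2 x)) x := by
  have hne := den_ne hx
  have hfun : (fun y : ℝ => y * F1 y)
      = fun y : ℝ => (π*y*Real.exp (π*y)) / (Real.exp (π*y) - 1)^2 := by
    funext y; unfold F1; ring
  rw [hfun]
  have hN : HasDerivAt (fun y : ℝ => π*y*Real.exp (π*y))
      ((π*1)*Real.exp (π*x) + (π*x)*(Real.exp (π*x)*(π*1))) x :=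
    ((hasDerivAt_id x).const_mul π).mul (exp_pi_deriv x)
  have hD : HasDerivAt (fun y : ℝ => (Real.exp (π*y) - 1)^2)
      ((2:ℕ)*(Real.exp (π*x) - 1)^(2-1)*(Real.exp (π*x)*(π*1))) x :=
    ((exp_pi_deriv x).sub_const 1).pow 2
  have h := hN.div hD (pow_ne_zero 2 hne)
  refine h.congr_deriv ?_
  unfold F2
  field_simp
  ring

lemma hd3 {x : ℝ} (hx : 0 < x) :
    HasDerivAt (fun y : ℝ => y * F2 y) (-(F3 x)) x := by
  have hne := den_ne hx
  have hfun : (fun y : ℝ => y * F2 y)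
      = fun y : ℝ => (π^2*y^2*((Real.exp (π*y))^2 + Real.exp (π*y))
          - π*y*((Real.exp (π*y))^2 - Real.exp (π*y))) / (Real.exp (π*y) - 1)^3 := by
    funext y; unfold F2; ring
  rw [hfun]
  have hE := exp_pi_deriv x
  have hE2 : HasDerivAt (fun y : ℝ => (Real.exp (π*y))^2)
      ((2:ℕ)*(Real.exp (π*x))^(2-1)*(Real.exp (π*x)*(π*1))) x := hE.pow 2
  have hy2 : HasDerivAt (fun y : ℝ => y^2) ((2:ℕ)*x^(2-1)*1) x := (hasDerivAt_id x).pow 2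
  have hN : HasDerivAt (fun y : ℝ => π^2*(y^2*((Real.exp (π*y))^2 + Real.exp (π*y)))
        - π*(y*((Real.exp (π*y))^2 - Real.exp (π*y))))
      (π^2*(((2:ℕ)*x^(2-1)*1)*((Real.exp (π*x))^2 + Real.exp (π*x))
          + x^2*((2:ℕ)*(Real.exp (π*x))^(2-1)*(Real.exp (π*x)*(π*1)) + Real.exp (π*x)*(π*1)))
        - π*(1*((Real.exp (π*x))^2 - Real.exp (π*x))
          + x*((2:ℕ)*(Real.exp (π*x))^(2-1)*(Real.exp (π*x)*(π*1)) - Real.exp (π*x)*(π*1)))) x :=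
    ((hy2.mul (hE2.add hE)).const_mul (π^2)).sub
      (((hasDerivAt_id x).mul (hE2.sub hE)).const_mul π)
  have hD : HasDerivAt (fun y : ℝ => (Real.exp (π*y) - 1)^3)
      ((3:ℕ)*(Real.exp (π*x) - 1)^(3-1)*(Real.exp (π*x)*(π*1))) x :=
    (hE.sub_const 1).pow 3
  have h := hN.div hD (pow_ne_zero 3 hne)
  have hfun2 : (fun y : ℝ => (π^2*y^2*((Real.exp (π*y))^2 + Real.exp (π*y))
          - π*y*((Real.exp (π*y))^2 - Real.exp (π*y))) / (Real.exp (π*y) - 1)^3)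
      = fun y : ℝ => (π^2*(y^2*((Real.exp (π*y))^2 + Real.exp (π*y)))
          - π*(y*((Real.exp (π*y))^2 - Real.exp (π*y)))) / (Real.exp (π*y) - 1)^3 := by
    funext y; ring_nf
  rw [hfun2]
  refine h.congr_deriv ?_
  unfold F3
  field_simp
  ring

lemma hd4 {x : ℝ} (hx : 0 < x) :
    HasDerivAt (fun y : ℝ => y * F3 y) (-(F4 x)) x := by
  have hne := den_ne hx
  have hfun : (fun y : ℝ => y * F3 y)
      = fun y : ℝ => (π^3*(y^3*((Real.exp (π*y))^3 + 4*(Real.exp (π*y))^2 + Real.exp (π*y)))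
          - 3*π^2*(y^2*((Real.exp (π*y))^3 - Real.exp (π*y)))
          + π*(y*((Real.exp (π*y))^3 - 2*(Real.exp (π*y))^2 + Real.exp (π*y))))
          / (Real.exp (π*y) - 1)^4 := by
    funext y; unfold F3; ring
  rw [hfun]
  have hE := exp_pi_deriv x
  have hE2 : HasDerivAt (fun y : ℝ => (Real.exp (π*y))^2)
      ((2:ℕ)*(Real.exp (π*x))^(2-1)*(Real.exp (π*x)*(π*1))) x := hE.pow 2
  have hE3 : HasDerivAt (fun y : ℝ => (Real.exp (π*y))^3)
      ((3:ℕ)*(Real.exp (π*x))^(3-1)*(Real.exp (π*x)*(π*1))) x := hE.pow 3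
  have hy2 : HasDerivAt (fun y : ℝ => y^2) ((2:ℕ)*x^(2-1)*1) x := (hasDerivAt_id x).pow 2
  have hy3 : HasDerivAt (fun y : ℝ => y^3) ((3:ℕ)*x^(3-1)*1) x := (hasDerivAt_id x).pow 3
  have hA : HasDerivAt (fun y : ℝ => (Real.exp (π*y))^3 + 4*(Real.exp (π*y))^2 + Real.exp (π*y))
      ((3:ℕ)*(Real.exp (π*x))^(3-1)*(Real.exp (π*x)*(π*1))
        + 4*((2:ℕ)*(Real.exp (π*x))^(2-1)*(Real.exp (π*x)*(π*1))) + Real.exp (π*x)*(π*1)) x :=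
    (hE3.add (hE2.const_mul 4)).add hE
  have hB : HasDerivAt (fun y : ℝ => (Real.exp (π*y))^3 - Real.exp (π*y))
      ((3:ℕ)*(Real.exp (π*x))^(3-1)*(Real.exp (π*x)*(π*1)) - Real.exp (π*x)*(π*1)) x :=
    hE3.sub hE
  have hC : HasDerivAt (fun y : ℝ => (Real.exp (π*y))^3 - 2*(Real.exp (π*y))^2 + Real.exp (π*y))
      ((3:ℕ)*(Real.exp (π*x))^(3-1)*(Real.exp (π*x)*(π*1))
        - 2*((2:ℕ)*(Real.exp (π*x))^(2-1)*(Real.exp (π*x)*(π*1))) + Real.exp (π*x)*(π*1)) x :=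
    (hE3.sub (hE2.const_mul 2)).add hE
  have hN := (((hy3.mul hA).const_mul (π^3)).sub
      (((hy2.mul hB)).const_mul (3*π^2))).add (((hasDerivAt_id x).mul hC).const_mul π)
  have hD : HasDerivAt (fun y : ℝ => (Real.exp (π*y) - 1)^4)
      ((4:ℕ)*(Real.exp (π*x) - 1)^(4-1)*(Real.exp (π*x)*(π*1))) x :=
    (hE.sub_const 1).pow 4
  have h := hN.div hD (pow_ne_zero 4 hne)
  refine h.congr_deriv ?_
  unfold F4
  simp only [Pi.add_apply, Pi.sub_apply, Pi.mul_apply, id]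
  field_simp
  ring

lemma mulkS_eq : (fun y : ℝ => y * (1 / (y * (Real.exp (π * y) - 1))))
    = fun y : ℝ => (Real.exp (π*y) - 1)⁻¹ := by
  funext y
  by_cases hy : y = 0
  · subst hy; simp
  · rw [one_div, mul_inv, ← mul_assoc, mul_inv_cancel₀ hy, one_mul]

lemma DOp_congr {f g : ℝ → ℝ} (h : ∀ y, 0 < y → f y = g y) {x : ℝ} (hx : 0 < x) :
    DOp f x = DOp g x := by
  unfold DOp
  congr 1
  apply Filter.EventuallyEq.deriv_eq
  filter_upwards [Ioi_mem_nhds hx] with y hy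
  rw [h y hy]

lemma eq1 : ∀ x, 0 < x → DOp (fun x : ℝ => 1 / (x * (Real.exp (π * x) - 1))) x = F1 x := by
  intro x hx
  unfold DOp
  rw [mulkS_eq, (hd1 hx).deriv]
  ring

lemma eq2 : ∀ x, 0 < x →
    DOp (DOp (fun x : ℝ => 1 / (x * (Real.exp (π * x) - 1)))) x = F2 x := by
  intro x hx
  rw [DOp_congr eq1 hx]
  unfold DOp
  rw [(hd2 hx).deriv]
  ring

lemma eq3 : ∀ x, 0 < x →
    DOp (DOp (DOp (fun x : ℝ => 1 / (x * (Real.exp (π * x) - 1))))) x = F3 x := by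
  intro x hx
  rw [DOp_congr eq2 hx]
  unfold DOp
  rw [(hd3 hx).deriv]
  ring

lemma eq4 : ∀ x, 0 < x →
    DOp (DOp (DOp (DOp (fun x : ℝ => 1 / (x * (Real.exp (π * x) - 1)))))) x = F4 x := by
  intro x hx
  rw [DOp_congr eq3 hx]
  unfold DOp
  rw [(hd4 hx).deriv]
  ring

lemma exp_third_lo : (2.56633189 : ℝ) ≤ Real.exp (π * 0.3) := by
  have h1 : (0.9424776 : ℝ) ≤ π * 0.3 := by nlinarith [Real.pi_gt_d6]
  have h2 := Real.exp_le_exp.mpr h1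
  refine le_trans ?_ h2
  have h3 := Real.sum_le_exp_of_nonneg (x := (0.9424776:ℝ)) (by norm_num) 12
  refine le_trans ?_ h3
  simp only [Finset.sum_range_succ, Finset.sum_range_zero]
  norm_num [Nat.factorial]

lemma exp_third_hi : Real.exp (π * 0.3) ≤ (2.56633267 : ℝ) := by
  have h1 : π * 0.3 ≤ (0.9424779 : ℝ) := by nlinarith [Real.pi_lt_d6]
  have h2 := Real.exp_le_exp.mpr h1
  refine le_trans h2 ?_
  have h3 := Real.exp_bound' (x := (0.9424779:ℝ)) (by norm_num) (by norm_num) (n := 12)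
    (by norm_num)
  refine le_trans h3 ?_
  simp only [Finset.sum_range_succ, Finset.sum_range_zero]
  norm_num [Nat.factorial]

lemma E_bounds : (16.9020140 : ℝ) ≤ Real.exp (π * 0.9) ∧ Real.exp (π * 0.9) ≤ 16.9020297 := by
  have h : π * 0.9 = (3:ℕ) * (π * 0.3) := by push_cast; ring
  rw [h, Real.exp_nat_mul]
  have h1 := exp_third_lo
  have h2 := exp_third_hi
  have hpos : (0:ℝ) < Real.exp (π * 0.3) := Real.exp_pos _
  constructor
  · calc (16.9020140:ℝ) ≤ 2.56633189^3 := by norm_num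
      _ ≤ Real.exp (π * 0.3) ^ 3 := pow_le_pow_left₀ (by norm_num) h1 3
  · calc Real.exp (π * 0.3) ^ 3 ≤ 2.56633267^3 :=
        pow_le_pow_left₀ (le_of_lt hpos) h2 3
      _ ≤ 16.9020297 := by norm_num

set_option maxHeartbeats 1000000 in
lemma F4_neg : F4 0.9 < 0 := by
  unfold F4
  obtain ⟨hE1, hE2⟩ := E_bounds
  set E := Real.exp (π * 0.9) with hE
  have hp1 := Real.pi_gt_d6
  have hp2 := Real.pi_lt_d6
  have hEgt : (1:ℝ) < E := by linarith
  have hE0 : (0:ℝ) ≤ E := by linarith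
  have hEm0 : (0:ℝ) ≤ E - 1 := by linarith
  have hsq : E^2 ≤ (16.9020297:ℝ)^2 := pow_le_pow_left₀ hE0 hE2 2
  have hsq' : (16.9020140:ℝ)^2 ≤ E^2 := pow_le_pow_left₀ (by norm_num) hE1 2
  have hcb : E^3 ≤ (16.9020297:ℝ)^3 := pow_le_pow_left₀ hE0 hE2 3
  have hcb' : (16.9020140:ℝ)^3 ≤ E^3 := pow_le_pow_left₀ (by norm_num) hE1 3
  have hq4' : E^4 ≤ (16.9020297:ℝ)^4 := pow_le_pow_left₀ hE0 hE2 4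
  have hm3' : (15.9020140:ℝ)^3 ≤ (E-1)^3 :=
    pow_le_pow_left₀ (by norm_num) (by linarith) 3
  have hm2 : (E-1)^2 ≤ (15.9020297:ℝ)^2 := pow_le_pow_left₀ hEm0 (by linarith) 2
  apply div_neg_of_neg_of_pos
  · -- numerator negative
    have hT1 : (67966.4914 : ℝ) ≤ E*(E-1)^3 := by
      calc (67966.4914:ℝ) ≤ 16.9020140 * 15.9020140^3 := by norm_num
        _ ≤ E*(E-1)^3 := mul_le_mul hE1 hm3' (by norm_num) hE0
    have hT2 : ((E^2+E)*(E-1)^2 : ℝ) ≤ 76514.9422 := by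
      calc ((E^2+E)*(E-1)^2 : ℝ)
          ≤ ((16.9020297:ℝ)^2 + 16.9020297) * 15.9020297^2 :=
            mul_le_mul (by linarith) hm2 (by positivity) (by norm_num)
        _ ≤ 76514.9422 := by norm_num
    have hT3 : (95223.6321 : ℝ) ≤ (E^3+4*E^2+E)*(E-1) := by
      calc (95223.6321:ℝ)
          ≤ ((16.9020140:ℝ)^3 + 4*(16.9020140:ℝ)^2 + 16.9020140) * 15.9020140 := by norm_num
        _ ≤ (E^3+4*E^2+E)*(E-1) :=
            mul_le_mul (by linarith) (by linarith) (by norm_num) (by nlinarith)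
    have hT4 : (E^4+11*E^3+11*E^2+E : ℝ) ≤ 137885.6653 := by
      have h11 : (11:ℝ)*E^3 ≤ 11*(16.9020297:ℝ)^3 := by linarith
      have h12 : (11:ℝ)*E^2 ≤ 11*(16.9020297:ℝ)^2 := by linarith
      nlinarith [hq4', h11, h12, hE2]
    have hp0 : (0:ℝ) < E := by linarith
    have hpw2 := pow_pos hp0 2
    have hpw3 := pow_pos hp0 3
    have hpw4 := pow_pos hp0 4
    have hT2p : (0:ℝ) < (E^2+E)*(E-1)^2 :=
      mul_pos (by linarith) (pow_pos (by linarith) 2)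
    have hT4p : (0:ℝ) < E^4+11*E^3+11*E^2+E := by linarith
    have hpp : (0:ℝ) < π := Real.pi_pos
    have hq2 : π^2 ≤ (9.86960658 : ℝ) := by
      calc π^2 ≤ (3.141593:ℝ)^2 := pow_le_pow_left₀ (le_of_lt hpp) (le_of_lt hp2) 2
        _ ≤ 9.86960658 := by norm_num
    have hq3 : (31.00625732 : ℝ) ≤ π^3 := by
      calc (31.00625732:ℝ) ≤ (3.141592:ℝ)^3 := by norm_num
        _ ≤ π^3 := pow_le_pow_left₀ (by norm_num) (le_of_lt hp1) 3
    have hq4 : π^4 ≤ (97.409134 : ℝ) := by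
      calc π^4 ≤ (3.141593:ℝ)^4 := pow_le_pow_left₀ (le_of_lt hpp) (le_of_lt hp2) 4
        _ ≤ 97.409134 := by norm_num
    have m1 : (3.141592 : ℝ) * 67966.4914 ≤ π * (E*(E-1)^3) :=
      mul_le_mul (le_of_lt hp1) hT1 (by norm_num) (by linarith)
    have m2 : π^2 * ((E^2+E)*(E-1)^2) ≤ (9.86960658 : ℝ) * 76514.9422 :=
      mul_le_mul hq2 hT2 (le_of_lt hT2p) (by norm_num)
    have m3 : (31.00625732 : ℝ) * 95223.6321 ≤ π^3 * ((E^3+4*E^2+E)*(E-1)) :=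
      mul_le_mul hq3 hT3 (by norm_num) (by positivity)
    have m4 : π^4 * (E^4+11*E^3+11*E^2+E) ≤ (97.409134 : ℝ) * 137885.6653 :=
      mul_le_mul hq4 hT4 (le_of_lt hT4p) (by norm_num)
    have hfin : (-(3.141592 * 67966.4914) + 6.3*(9.86960658 * 76514.9422)
        - 4.86*(31.00625732 * 95223.6321) + 0.729*(97.409134 * 137885.6653) : ℝ) < 0 := by
      norm_num
    linarith [m1, m2, m3, m4, hfin]
  · exact pow_pos (by linarith) 5

/-- for `k_S(x) = 1/(x·(e^{πx} − 1))`, one has `(D⁴k_S)(0.9) < 0`; in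
particular `D⁴k_S` is not nonnegative on `(0,∞)`. -/
theorem hyperbolic_sine_not_in_L3 :
    (DOp^[4] (fun x : ℝ => 1 / (x * (Real.exp (π * x) - 1)))) 0.9 < 0 ∧
    ¬ ∀ x : ℝ, 0 < x →
        0 ≤ (DOp^[4] (fun x : ℝ => 1 / (x * (Real.exp (π * x) - 1)))) x := by
  have key : (DOp^[4] (fun x : ℝ => 1 / (x * (Real.exp (π * x) - 1)))) 0.9 < 0 := by
    have h : (DOp^[4] (fun x : ℝ => 1 / (x * (Real.exp (π * x) - 1)))) 0.9
        = DOp (DOp (DOp (DOp (fun x : ℝ => 1 / (x * (Real.exp (π * x) - 1)))))) 0.9 := by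
      simp [Function.iterate_succ, Function.comp]
    rw [h, eq4 0.9 (by norm_num)]
    exact F4_neg
  refine ⟨key, fun h => ?_⟩
  have := h 0.9 (by norm_num)
  linarith
end

section
/- Let h_C(x) = (π/4)·cosh(πx/2)/sinh²(πx/2) for x > 0. Then for every x > 0, the derivative of x ↦ −x·h_C(x) at x equals (π/8)·(sinh(πx/2))^{−1}·(πx·coth²(πx/2) − 2·coth(πx/2) + πx·(sinh(πx/2))^{−2}) with coth(u) = cosh(u)/sinh(u), and this quantity is nonnegative for all x > 0. -/
open Real

lemma aux_sinh_le (u : ℝ) (hu : 0 ≤ u) : Real.sinh u ≤ u * Real.cosh u := by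
  have key : ∀ v : ℝ, HasDerivAt (fun t : ℝ => t * Real.cosh t - Real.sinh t)
      (v * Real.sinh v) v := by
    intro v
    have h1 : HasDerivAt (fun t : ℝ => t * Real.cosh t)
        (1 * Real.cosh v + v * Real.sinh v) v :=
      (hasDerivAt_id v).mul (Real.hasDerivAt_cosh v)
    have h2 := h1.sub (Real.hasDerivAt_sinh v)
    exact h2.congr_deriv (by ring)
  have hmono : MonotoneOn (fun t : ℝ => t * Real.cosh t - Real.sinh t) (Set.Ici 0) := by
    apply monotoneOn_of_deriv_nonneg (convex_Ici 0)
    · exact (Continuous.sub (continuous_id.mul Real.continuous_cosh) Real.continuous_sinh).continuousOn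
    · intro v hv
      exact ((key v).differentiableAt).differentiableWithinAt
    · intro v hv
      rw [(key v).deriv]
      rw [interior_Ici] at hv
      exact mul_nonneg hv.le (Real.sinh_nonneg_iff.2 hv.le)
  have := hmono (Set.self_mem_Ici) hu hu
  simp at this
  linarith

/-- for `h_C(x) = (π/4)·cosh(πx/2)/sinh²(πx/2)` on `(0,∞)`, the derivative
of `x ↦ −x·h_C(x)` equals
`(π/8)·(sinh(πx/2))⁻¹·(πx·coth²(πx/2) − 2·coth(πx/2) + πx·(sinh(πx/2))⁻²)`
(with `coth u = cosh u / sinh u`), and this quantity is nonnegative for all `x > 0`. -/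
theorem hyperbolic_cosine_bdlp_levy_density_selfdecomposable
    (hC : ℝ → ℝ)
    (hhC : ∀ x : ℝ, 0 < x → hC x = (π / 4) * Real.cosh (π * x / 2) / Real.sinh (π * x / 2) ^ 2) :
    ∀ x : ℝ, 0 < x →
      deriv (fun y : ℝ => -(y * hC y)) x
          = (π / 8) * (Real.sinh (π * x / 2))⁻¹ *
              (π * x * (Real.cosh (π * x / 2) / Real.sinh (π * x / 2)) ^ 2
                - 2 * (Real.cosh (π * x / 2) / Real.sinh (π * x / 2))
                + π * x * (Real.sinh (π * x / 2))⁻¹ ^ 2) ∧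
      0 ≤ (π / 8) * (Real.sinh (π * x / 2))⁻¹ *
            (π * x * (Real.cosh (π * x / 2) / Real.sinh (π * x / 2)) ^ 2
              - 2 * (Real.cosh (π * x / 2) / Real.sinh (π * x / 2))
              + π * x * (Real.sinh (π * x / 2))⁻¹ ^ 2) := by
  intro x hx
  set s := Real.sinh (π * x / 2) with hs
  set c := Real.cosh (π * x / 2) with hc
  have hu : 0 < π * x / 2 := by positivity
  have hspos : 0 < s := Real.sinh_pos_iff.2 hu
  have hsne : s ≠ 0 := ne_of_gt hspos
  have hcpos : 0 < c := Real.cosh_pos _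
  have hpyth : c ^ 2 - s ^ 2 = 1 := Real.cosh_sq_sub_sinh_sq _
  constructor
  · -- derivative
    have heq : (fun y : ℝ => -(y * hC y)) =ᶠ[nhds x]
        (fun y : ℝ => -(y * ((π / 4) * Real.cosh (π * y / 2) / Real.sinh (π * y / 2) ^ 2))) := by
      filter_upwards [Ioi_mem_nhds hx] with y hy
      rw [hhC y hy]
    rw [heq.deriv_eq]
    have hlin : ∀ y : ℝ, HasDerivAt (fun t : ℝ => π * t / 2) (π / 2) y := by
      intro y
      simpa using ((hasDerivAt_id y).const_mul π).div_const 2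
    have hsinh : HasDerivAt (fun y : ℝ => Real.sinh (π * y / 2)) (c * (π / 2)) x :=
      (Real.hasDerivAt_sinh _).comp x (hlin x)
    have hcosh : HasDerivAt (fun y : ℝ => Real.cosh (π * y / 2)) (s * (π / 2)) x :=
      (Real.hasDerivAt_cosh _).comp x (hlin x)
    have hden : HasDerivAt (fun y : ℝ => Real.sinh (π * y / 2) ^ 2)
        (2 * s * (c * (π / 2))) x := by
      have := hsinh.pow 2
      exact this.congr_deriv (by rw [← hs]; norm_num)
    have hnum : HasDerivAt (fun y : ℝ => (π / 4) * Real.cosh (π * y / 2))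
        ((π / 4) * (s * (π / 2))) x := hcosh.const_mul _
    have hdne : s ^ 2 ≠ 0 := pow_ne_zero 2 hsne
    have hq := hnum.div hden hdne
    have hf := ((hasDerivAt_id x).mul hq).neg
    have hf' : deriv (fun y : ℝ => -(y * ((π / 4) * Real.cosh (π * y / 2) / Real.sinh (π * y / 2) ^ 2))) x
        = -(1 * ((π / 4) * c / s ^ 2) + x * ((π / 4 * (s * (π / 2)) * s ^ 2 - π / 4 * c * (2 * s * (c * (π / 2)))) / (s ^ 2) ^ 2)) := by
      refine (HasDerivAt.deriv (hf.congr_deriv ?_)); simp [hs, hc]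
    rw [hf']
    field_simp
    linear_combination (8 * π * x) * hpyth
  · -- nonnegativity
    have hkey : s * c ≤ (π * x / 2) * c ^ 2 := by
      have h1 : s ≤ (π * x / 2) * c := aux_sinh_le _ hu.le
      calc s * c ≤ ((π * x / 2) * c) * c := by nlinarith
        _ = (π * x / 2) * c ^ 2 := by ring
    have hN : 0 ≤ π * x * c ^ 2 - 2 * c * s + π * x := by nlinarith
    have hrw : (π / 8) * s⁻¹ * (π * x * (c / s) ^ 2 - 2 * (c / s) + π * x * s⁻¹ ^ 2)
        = (π / 8) * (π * x * c ^ 2 - 2 * c * s + π * x) / s ^ 3 := by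
      field_simp
    rw [hrw]
    positivity
end

section
/- Fix α > 0 and let k_α(x) = e^{−απx}/(x·(1 − e^{−πx})) for x > 0. Then for every x > 0, the derivative of x ↦ −x·k_α(x) at x equals π·e^{−απx}·(α + (1 − α)·e^{−πx})/(1 − e^{−πx})², and this quantity is strictly positive for all x > 0; hence x ↦ x·k_α(x) is strictly decreasing on (0, ∞). -/
open Real

lemma aux_hasDeriv (α : ℝ) (kα : ℝ → ℝ)
    (hkα : ∀ x : ℝ, 0 < x →
      kα x = Real.exp (-(α * π * x)) / (x * (1 - Real.exp (-(π * x)))))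
    (x : ℝ) (hx : 0 < x) :
    HasDerivAt (fun y : ℝ => -(y * kα y))
      (π * Real.exp (-(α * π * x)) * (α + (1 - α) * Real.exp (-(π * x)))
          / (1 - Real.exp (-(π * x))) ^ 2) x := by
  have hden : ∀ y : ℝ, 0 < y → (1 : ℝ) - Real.exp (-(π * y)) ≠ 0 := by
    intro y hy
    have : Real.exp (-(π * y)) < 1 := by
      rw [Real.exp_lt_one_iff]
      nlinarith [Real.pi_pos]
    linarith
  have heq : (fun y : ℝ => -(y * kα y)) =ᶠ[nhds x]
      (fun y : ℝ => -(Real.exp (-(α * π * y)) / (1 - Real.exp (-(π * y))))) := by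
    filter_upwards [Ioi_mem_nhds hx] with y hy
    have hy' : (0:ℝ) < y := hy
    rw [hkα y hy']
    field_simp [hden y hy', hy'.ne']
  have h1 : HasDerivAt (fun y : ℝ => Real.exp (-(α * π * y)))
      (Real.exp (-(α * π * x)) * (-(α * π))) x := by
    have := (hasDerivAt_id x).const_mul (α * π)
    have := ((this.neg).exp)
    simpa [mul_comm] using this
  have h2 : HasDerivAt (fun y : ℝ => (1 : ℝ) - Real.exp (-(π * y)))
      (-(Real.exp (-(π * x)) * (-π))) x := by
    have := (hasDerivAt_id x).const_mul π
    have := ((this.neg).exp)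
    exact (this.const_sub (1:ℝ)).congr_deriv (by simp only [Pi.neg_apply, id]; ring)
  have h3 := (h1.div h2 (hden x hx)).neg
  have : HasDerivAt (fun y : ℝ => -(Real.exp (-(α * π * y)) / (1 - Real.exp (-(π * y)))))
      (π * Real.exp (-(α * π * x)) * (α + (1 - α) * Real.exp (-(π * x)))
          / (1 - Real.exp (-(π * x))) ^ 2) x := by
    exact h3.congr_deriv (by rw [← neg_div]; congr 1; ring)
  exact this.congr_of_eventuallyEq heq

/-- for `α > 0` and `k_α(x) = e^{−απx}/(x·(1 − e^{−πx}))` on `(0,∞)`, the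
derivative of `x ↦ −x·k_α(x)` equals
`π·e^{−απx}·(α + (1 − α)·e^{−πx})/(1 − e^{−πx})²`, which is strictly positive; hence
`x ↦ x·k_α(x)` is strictly decreasing on `(0,∞)`. -/
theorem logistic_levy_density_selfdecomposable
    (α : ℝ) (hα : 0 < α) (kα : ℝ → ℝ)
    (hkα : ∀ x : ℝ, 0 < x →
      kα x = Real.exp (-(α * π * x)) / (x * (1 - Real.exp (-(π * x))))) :
    (∀ x : ℝ, 0 < x →
      deriv (fun y : ℝ => -(y * kα y)) x
          = π * Real.exp (-(α * π * x)) * (α + (1 - α) * Real.exp (-(π * x)))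
              / (1 - Real.exp (-(π * x))) ^ 2 ∧
      0 < π * Real.exp (-(α * π * x)) * (α + (1 - α) * Real.exp (-(π * x)))
            / (1 - Real.exp (-(π * x))) ^ 2) ∧
    StrictAntiOn (fun x : ℝ => x * kα x) (Set.Ioi 0) := by
  have hpos : ∀ x : ℝ, 0 < x →
      0 < π * Real.exp (-(α * π * x)) * (α + (1 - α) * Real.exp (-(π * x)))
            / (1 - Real.exp (-(π * x))) ^ 2 := by
    intro x hx
    have ht1 : Real.exp (-(π * x)) < 1 := by
      rw [Real.exp_lt_one_iff]; nlinarith [Real.pi_pos]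
    have ht0 : 0 < Real.exp (-(π * x)) := Real.exp_pos _
    have hnum : 0 < α + (1 - α) * Real.exp (-(π * x)) := by nlinarith
    have hsq : 0 < (1 - Real.exp (-(π * x))) ^ 2 := pow_pos (by linarith) 2
    exact div_pos (mul_pos (mul_pos Real.pi_pos (Real.exp_pos _)) hnum) hsq
  refine ⟨fun x hx => ⟨(aux_hasDeriv α kα hkα x hx).deriv, hpos x hx⟩, ?_⟩
  have hmono : StrictMonoOn (fun y : ℝ => -(y * kα y)) (Set.Ioi 0) := by
    apply strictMonoOn_of_deriv_pos (convex_Ioi 0)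
    · intro y hy
      exact (aux_hasDeriv α kα hkα y hy).differentiableAt.continuousAt.continuousWithinAt
    · intro y hy
      rw [interior_Ioi] at hy
      rw [(aux_hasDeriv α kα hkα y hy).deriv]
      exact hpos y hy
  intro a ha b hb hab
  have := hmono ha hb hab
  simpa using this
end

section
/- For every real α > 0 and every real t, the infinite product ∏_{k=1}^{∞} 1/(1 + (t/((α + k − 1)π))²) converges and equals |Γ(α + it/π)|²/Γ(α)², where Γ is the complex Gamma function. -/
open Real Filter Finset Topology

/-- for every real `α > 0` and real `t`, the infinite product
`∏_{k=1}^∞ 1/(1 + (t/((α + k − 1)π))²)` converges and equals `|Γ(α + it/π)|²/Γ(α)²`,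
where `Γ` is the complex Gamma function. -/
theorem hasProd_logistic_charfun (α : ℝ) (hα : 0 < α) (t : ℝ) :
    HasProd (fun k : ℕ => 1 / (1 + (t / ((α + (k : ℝ)) * π)) ^ 2))
      (‖Complex.Gamma ((α : ℂ) + (t / π : ℝ) * Complex.I)‖ ^ 2
        / Real.Gamma α ^ 2) := by
  set y : ℝ := t / π with hy
  set z : ℂ := (α : ℂ) + (y : ℝ) * Complex.I with hz
  set f : ℕ → ℝ := fun k => 1 / (1 + (t / ((α + (k : ℝ)) * π)) ^ 2) with hf
  have hπ : (0:ℝ) < π := Real.pi_pos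
  have hαk : ∀ k : ℕ, (0:ℝ) < α + k := fun k => by positivity
  have hfk : ∀ k : ℕ, f k = 1 / (1 + (y / (α + k)) ^ 2) := by
    intro k
    rw [hf, hy]
    rw [div_div, mul_comm]
  have hfpos : ∀ k : ℕ, 0 < f k := by
    intro k; rw [hf]; positivity
  -- summability of logs
  have hc : Summable (fun k : ℕ => (y / (α + k)) ^ 2) := by
    have hg : Summable (fun k : ℕ => y ^ 2 * (1 / ((k:ℝ) + 1) ^ 2)) := by
      apply Summable.mul_left
      have h0 : Summable (fun k : ℕ => 1 / (k:ℝ) ^ 2) :=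
        Real.summable_one_div_nat_pow.mpr one_lt_two
      have := (summable_nat_add_iff 1).mpr h0
      exact this.congr fun k => by push_cast; ring_nf
    have h2 : Summable (fun k : ℕ => (y / (α + ((k:ℝ) + 1))) ^ 2) := by
      apply hg.of_nonneg_of_le (fun k => by positivity)
      intro k
      have hk0 : (0:ℝ) ≤ (k:ℝ) := Nat.cast_nonneg k
      have hd : ((k:ℝ) + 1) ^ 2 ≤ (α + ((k:ℝ) + 1)) ^ 2 := by nlinarith
      rw [div_pow, mul_one_div]
      apply div_le_div_of_nonneg_left (sq_nonneg y) (by positivity) hd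
    have h2' : Summable (fun k : ℕ => (y / (α + ((k + 1 : ℕ) : ℝ))) ^ 2) :=
      h2.congr fun k => by push_cast; ring_nf
    exact (summable_nat_add_iff 1).mp h2'
  have hlog : Summable (fun k : ℕ => Real.log (f k)) := by
    rw [← summable_neg_iff]
    apply Summable.of_nonneg_of_le _ _ hc
    · intro k
      rw [hfk k, one_div, Real.log_inv, neg_neg]
      apply Real.log_nonneg; nlinarith [sq_nonneg (y / (α + k))]
    · intro k
      rw [hfk k, one_div, Real.log_inv, neg_neg]
      have h1 : (0:ℝ) < 1 + (y / (α + k)) ^ 2 := by positivity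
      linarith [Real.log_le_sub_one_of_pos h1]
  have hprod : HasProd f (Real.exp (∑' k, Real.log (f k))) := by
    have := hlog.hasSum.rexp
    refine this.congr_fun fun k => ?_
    simp only [Function.comp_apply]
    exact (Real.exp_log (hfpos k)).symm
  -- algebra facts
  have habs : ∀ k : ℕ, ‖z + k‖ ^ 2 = (α + k) ^ 2 + y ^ 2 := by
    intro k
    rw [← Complex.normSq_eq_norm_sq, Complex.normSq_apply]
    simp [hz]
    ring
  have habsz : ∀ k : ℕ, 0 < ‖z + k‖ := by
    intro k
    have h1 : ‖z + k‖ ^ 2 > 0 := by rw [habs k]; positivity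
    nlinarith [norm_nonneg (z + (k:ℂ))]
  -- partial products equal ratio of Gamma sequences
  have key : ∀ n : ℕ, 1 ≤ n →
      ∏ k ∈ range (n + 1), f k =
        ‖Complex.GammaSeq z n‖ ^ 2 / (Real.GammaSeq α n) ^ 2 := by
    intro n hn
    have hn' : (0:ℝ) < n := by exact_mod_cast hn
    have hA : (0:ℝ) < (n:ℝ) ^ α * Nat.factorial n := by positivity
    have hB : (0:ℝ) < ∏ j ∈ range (n + 1), ‖z + j‖ :=
      Finset.prod_pos fun j _ => habsz j
    have hC : (0:ℝ) < ∏ j ∈ range (n + 1), (α + j) :=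
      Finset.prod_pos fun j _ => hαk j
    have hb : ‖(n:ℂ) ^ z‖ = (n:ℝ) ^ α := by
      rw [← Complex.ofReal_natCast, Complex.norm_cpow_eq_rpow_re_of_pos hn']
      congr 1
      simp [hz]
    have e1 : ‖Complex.GammaSeq z n‖ =
        ((n:ℝ) ^ α * Nat.factorial n) / ∏ j ∈ range (n + 1), ‖z + j‖ := by
      rw [Complex.GammaSeq, norm_div, norm_mul, norm_prod, hb, Complex.norm_natCast]
    have e2 : Real.GammaSeq α n =
        ((n:ℝ) ^ α * Nat.factorial n) / ∏ j ∈ range (n + 1), (α + j) := rfl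
    have e3 : ∏ k ∈ range (n + 1), f k =
        ((∏ j ∈ range (n + 1), (α + (j:ℝ))) / ∏ j ∈ range (n + 1), ‖z + j‖) ^ 2 := by
      rw [div_pow, ← Finset.prod_pow, ← Finset.prod_pow, ← Finset.prod_div_distrib]
      refine Finset.prod_congr rfl fun k _ => ?_
      rw [hfk k, habs k]
      have h1 : (0:ℝ) < (α + k) ^ 2 + y ^ 2 := by positivity
      have h2 : (0:ℝ) < 1 + (y / (α + k)) ^ 2 := by positivity
      field_simp
    rw [e1, e2, e3]
    have hA2 : ((n:ℝ) ^ α * Nat.factorial n) ^ 2 ≠ 0 := by positivity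
    rw [div_pow, div_pow, div_pow, div_div_div_comm, div_self hA2, one_div, inv_div]
  -- limit of partial products
  have htend : Tendsto (fun n => ∏ k ∈ range n, f k) atTop
      (𝓝 (‖Complex.Gamma z‖ ^ 2 / Real.Gamma α ^ 2)) := by
    rw [← tendsto_add_atTop_iff_nat 1]
    have hG : Tendsto (fun n => ‖Complex.GammaSeq z n‖ ^ 2 / (Real.GammaSeq α n) ^ 2)
        atTop (𝓝 (‖Complex.Gamma z‖ ^ 2 / Real.Gamma α ^ 2)) := by
      apply Tendsto.div
      · exact ((continuous_norm.tendsto _).comp (Complex.GammaSeq_tendsto_Gamma z)).pow 2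
      · exact (Real.GammaSeq_tendsto_Gamma α).pow 2
      · exact pow_ne_zero 2 (Real.Gamma_pos_of_pos hα).ne'
    apply hG.congr'
    filter_upwards [eventually_ge_atTop 1] with n hn
    exact (key n hn).symm
  have heq := tendsto_nhds_unique hprod.tendsto_prod_nat htend
  rw [heq] at hprod
  exact hprod
end

section
/- For every real t, the integral ∫_0^∞ (cos(tx) − 1)·e^{−x}/x dx converges and equals −(1/2)·log(1 + t²). -/
open Real MeasureTheory

lemma abs_cos_sub_one_le (y : ℝ) : |Real.cos y - 1| ≤ |y| := by
  have h2 : Real.cos y = 2 * Real.cos (y / 2) ^ 2 - 1 := by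
    have := Real.cos_two_mul (y / 2)
    rw [show 2 * (y / 2) = y by ring] at this
    linarith
  have hs : Real.sin (y / 2) ^ 2 + Real.cos (y / 2) ^ 2 = 1 := Real.sin_sq_add_cos_sq _
  have h1 : Real.cos y - 1 = -(2 * Real.sin (y / 2) ^ 2) := by linarith
  have hsle : |Real.sin (y / 2)| ≤ |y / 2| := Real.abs_sin_le_abs
  have hsq : Real.sin (y / 2) ^ 2 ≤ |Real.sin (y / 2)| := by
    have h1' : |Real.sin (y / 2)| ≤ 1 := Real.abs_sin_le_one _
    calc Real.sin (y / 2) ^ 2 = |Real.sin (y / 2)| * |Real.sin (y / 2)| := by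
          rw [← abs_mul, abs_of_nonneg (mul_self_nonneg _)]; ring
      _ ≤ 1 * |Real.sin (y / 2)| := by nlinarith [abs_nonneg (Real.sin (y / 2))]
      _ = |Real.sin (y / 2)| := one_mul _
  rw [h1, abs_neg, abs_of_nonneg (by positivity)]
  have : |y / 2| = |y| / 2 := by rw [abs_div]; norm_num
  nlinarith [abs_nonneg y]

lemma laplace_integrable (t : ℝ) :
    IntegrableOn (fun x : ℝ => (Real.cos (t * x) - 1) * Real.exp (-x) / x) (Set.Ioi 0) := by
  have hmeas : AEStronglyMeasurable
      (fun x : ℝ => (Real.cos (t * x) - 1) * Real.exp (-x) / x)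
      (volume.restrict (Set.Ioi 0)) := by
    apply ContinuousOn.aestronglyMeasurable _ measurableSet_Ioi
    apply ContinuousOn.div
    · exact (((Real.continuous_cos.comp (continuous_const.mul continuous_id)).sub
        continuous_const).mul (Real.continuous_exp.comp continuous_neg)).continuousOn
    · exact continuous_id.continuousOn
    · intro x hx; exact ne_of_gt hx
  have hbound : IntegrableOn (fun x : ℝ => |t| * Real.exp (-x)) (Set.Ioi 0) := by
    simpa [IntegrableOn] using (exp_neg_integrableOn_Ioi 0 one_pos).const_mul |t|
  apply MeasureTheory.Integrable.mono hbound hmeas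
  filter_upwards [ae_restrict_mem measurableSet_Ioi] with x hx
  have hx0 : (0 : ℝ) < x := hx
  rw [Real.norm_eq_abs, Real.norm_eq_abs, abs_div, abs_mul]
  rw [abs_of_nonneg hx0.le, abs_of_nonneg (Real.exp_pos _).le,
    abs_of_nonneg (by positivity : (0:ℝ) ≤ |t| * Real.exp (-x))]
  rw [div_le_iff₀ hx0]
  have h1 : |Real.cos (t * x) - 1| ≤ |t| * x := by
    have := abs_cos_sub_one_le (t * x)
    rwa [abs_mul, abs_of_nonneg hx0.le] at this
  nlinarith [Real.exp_pos (-x), abs_nonneg (Real.cos (t * x) - 1)]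

lemma sin_exp_integrable (t : ℝ) :
    IntegrableOn (fun x : ℝ => -(Real.sin (t * x) * Real.exp (-x))) (Set.Ioi 0) := by
  have hbound : IntegrableOn (fun x : ℝ => Real.exp (-x)) (Set.Ioi 0) := by
    simpa using exp_neg_integrableOn_Ioi 0 one_pos
  apply MeasureTheory.Integrable.mono hbound
  · exact ((((Real.continuous_sin.comp (continuous_const.mul continuous_id)).mul
      (Real.continuous_exp.comp continuous_neg)).neg).aestronglyMeasurable)
  · filter_upwards with x
    rw [Real.norm_eq_abs, Real.norm_eq_abs, abs_neg, abs_mul,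
      abs_of_nonneg (Real.exp_pos _).le]
    nlinarith [Real.abs_sin_le_one (t * x), Real.exp_pos (-x), abs_nonneg (Real.sin (t*x))]

lemma sin_exp_integral (t : ℝ) :
    (∫ x in Set.Ioi (0 : ℝ), -(Real.sin (t * x) * Real.exp (-x))) = -(t / (1 + t ^ 2)) := by
  have ht : (1 : ℝ) + t ^ 2 ≠ 0 := by positivity
  set f : ℝ → ℝ := fun x =>
    Real.exp (-x) * (Real.sin (t * x) + t * Real.cos (t * x)) / (1 + t ^ 2) with hf
  have hderiv : ∀ x ∈ Set.Ici (0:ℝ), HasDerivAt f (-(Real.sin (t * x) * Real.exp (-x))) x := by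
    intro x _
    have h1 : HasDerivAt (fun x : ℝ => Real.exp (-x)) (-Real.exp (-x)) x := by
      simpa [Function.comp_def] using (Real.hasDerivAt_exp (-x)).comp x (hasDerivAt_neg x)
    have h2 : HasDerivAt (fun x : ℝ => Real.sin (t * x)) (Real.cos (t * x) * t) x := by
      simpa [Function.comp_def] using (Real.hasDerivAt_sin (t * x)).comp x ((hasDerivAt_id x).const_mul t)
    have h3 : HasDerivAt (fun x : ℝ => Real.cos (t * x)) (-Real.sin (t * x) * t) x := by
      simpa [Function.comp_def] using (Real.hasDerivAt_cos (t * x)).comp x ((hasDerivAt_id x).const_mul t)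
    have h4 := ((h1.mul (h2.add (h3.const_mul t))).div_const (1 + t ^ 2))
    refine h4.congr_deriv ?_
    simp only [Pi.add_apply]
    field_simp
    ring
  have htend : Filter.Tendsto f Filter.atTop (nhds 0) := by
    have hb : Filter.Tendsto (fun x : ℝ => Real.exp (-x)) Filter.atTop (nhds 0) := by
      simpa using Real.tendsto_exp_neg_atTop_nhds_zero
    have hbound : ∀ x : ℝ, |f x| ≤ (1 + |t|) / (1 + t ^ 2) * Real.exp (-x) := by
      intro x
      rw [hf]
      rw [abs_div, abs_mul, abs_of_nonneg (Real.exp_pos _).le,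
        abs_of_pos (by positivity : (0:ℝ) < 1 + t ^ 2)]
      have h5 : |Real.sin (t * x) + t * Real.cos (t * x)| ≤ 1 + |t| := by
        calc |Real.sin (t * x) + t * Real.cos (t * x)|
            ≤ |Real.sin (t * x)| + |t * Real.cos (t * x)| := abs_add_le _ _
          _ ≤ 1 + |t| := by
              rw [abs_mul]
              have := Real.abs_sin_le_one (t * x)
              have := Real.abs_cos_le_one (t * x)
              nlinarith [abs_nonneg t]
      calc Real.exp (-x) * |Real.sin (t * x) + t * Real.cos (t * x)| / (1 + t ^ 2)
          ≤ Real.exp (-x) * (1 + |t|) / (1 + t ^ 2) := by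
            gcongr
        _ = (1 + |t|) / (1 + t ^ 2) * Real.exp (-x) := by ring
    have h0 : Filter.Tendsto (fun x : ℝ => (1 + |t|) / (1 + t ^ 2) * Real.exp (-x))
        Filter.atTop (nhds 0) := by
      simpa using hb.const_mul ((1 + |t|) / (1 + t ^ 2))
    apply squeeze_zero_norm hbound h0
  have := MeasureTheory.integral_Ioi_of_hasDerivAt_of_tendsto'
      hderiv (sin_exp_integrable t) htend
  rw [this, hf]
  simp

lemma laplace_hasDerivAt (t : ℝ) :
    HasDerivAt (fun s : ℝ => ∫ x in Set.Ioi (0 : ℝ), (Real.cos (s * x) - 1) * Real.exp (-x) / x)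
      (-(t / (1 + t ^ 2))) t := by
  have key := hasDerivAt_integral_of_dominated_loc_of_deriv_le (μ := volume.restrict (Set.Ioi 0))
    (F := fun s x => (Real.cos (s * x) - 1) * Real.exp (-x) / x)
    (F' := fun s x => -(Real.sin (s * x) * Real.exp (-x)))
    (x₀ := t) (bound := fun x => Real.exp (-x)) (Metric.ball_mem_nhds t one_pos)
    ?_ (laplace_integrable t) ?_ ?_ ?_ ?_
  · have := key.2
    rwa [sin_exp_integral t] at this
  · filter_upwards with s
    exact (laplace_integrable s).aestronglyMeasurable
  · exact (sin_exp_integrable t).aestronglyMeasurable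
  · filter_upwards with x
    intro s _
    rw [Real.norm_eq_abs, abs_neg, abs_mul, abs_of_nonneg (Real.exp_pos _).le]
    nlinarith [Real.abs_sin_le_one (s * x), Real.exp_pos (-x), abs_nonneg (Real.sin (s * x))]
  · simpa [IntegrableOn] using exp_neg_integrableOn_Ioi 0 one_pos
  · filter_upwards [ae_restrict_mem measurableSet_Ioi] with x hx
    intro s _
    have hx0 : (0 : ℝ) < x := hx
    have h3 : HasDerivAt (fun s : ℝ => Real.cos (s * x)) (-Real.sin (s * x) * x) s := by
      simpa [Function.comp_def] using (Real.hasDerivAt_cos (s * x)).comp s ((hasDerivAt_id s).mul_const x)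
    have h4 := ((h3.sub_const 1).mul_const (Real.exp (-x))).div_const x
    refine h4.congr_deriv ?_
    field_simp

/-- for every real `t`, the integral
`∫_0^∞ (cos(tx) − 1)·e^{−x}/x dx` converges and equals `−(1/2)·log(1 + t²)`. -/
theorem laplace_levy_exponent (t : ℝ) :
    IntegrableOn (fun x : ℝ => (Real.cos (t * x) - 1) * Real.exp (-x) / x) (Set.Ioi 0) ∧
    (∫ x in Set.Ioi (0 : ℝ), (Real.cos (t * x) - 1) * Real.exp (-x) / x)
      = -(1 / 2) * Real.log (1 + t ^ 2) := by
  refine ⟨laplace_integrable t, ?_⟩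
  set F : ℝ → ℝ :=
    fun s => ∫ x in Set.Ioi (0 : ℝ), (Real.cos (s * x) - 1) * Real.exp (-x) / x with hF
  set G : ℝ → ℝ := fun s => F s + 1 / 2 * Real.log (1 + s ^ 2) with hG
  have hGderiv : ∀ s : ℝ, HasDerivAt G 0 s := by
    intro s
    have h1 : HasDerivAt (fun s : ℝ => 1 + s ^ 2) (2 * s) s := by
      simpa using ((hasDerivAt_pow 2 s).const_add 1)
    have h2 : HasDerivAt (fun s : ℝ => Real.log (1 + s ^ 2)) ((1 + s ^ 2)⁻¹ * (2 * s)) s :=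
      (Real.hasDerivAt_log (by positivity)).comp s h1
    have h3 := (laplace_hasDerivAt s).add (h2.const_mul (1 / 2))
    refine h3.congr_deriv ?_
    field_simp
    ring
  have hGconst : G t = G 0 := by
    apply is_const_of_deriv_eq_zero
    · exact fun s => (hGderiv s).differentiableAt
    · exact fun s => (hGderiv s).deriv
  have hF0 : F 0 = 0 := by
    rw [hF]
    simp
  have hG0 : G 0 = 0 := by
    rw [hG]
    simp [hF0]
  have : F t + 1 / 2 * Real.log (1 + t ^ 2) = 0 := by
    have := hGconst
    rw [hG0] at this
    simpa [hG] using this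
  linarith
end

section
/- For every real t ≠ 0, the integral ∫_0^∞ (cos(tx) − 1)·2/(x·(e^{πx} − 1)) dx converges and equals log(t/sinh(t)) (note t/sinh(t) > 0 for all t ≠ 0). -/
open Real MeasureTheory Set Filter
open Real MeasureTheory Set Filter Topology

lemma aux_integrable_sin_exp (a s : ℝ) (ha : 0 < a) :
    IntegrableOn (fun x : ℝ => Real.sin (s * x) * Real.exp (-(a * x))) (Set.Ioi 0) := by
  refine (exp_neg_integrableOn_Ioi 0 ha).mono' ?_ ?_
  · exact (((continuous_sin.comp (continuous_const.mul continuous_id)).mul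
      (continuous_exp.comp (continuous_const.mul continuous_id).neg))).aestronglyMeasurable
  · refine ae_of_all _ fun x => ?_
    rw [norm_mul, Real.norm_eq_abs, Real.norm_eq_abs, Real.abs_exp, neg_mul]
    calc |Real.sin (s*x)| * Real.exp (-(a*x)) ≤ 1 * Real.exp (-(a*x)) := by
          gcongr; exact Real.abs_sin_le_one _
      _ = Real.exp (-(a*x)) := one_mul _

lemma aux_integral_sin_exp (a s : ℝ) (ha : 0 < a)
    (hint : IntegrableOn (fun x : ℝ => Real.sin (s * x) * Real.exp (-(a * x))) (Set.Ioi 0)) :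
    ∫ x in Set.Ioi (0:ℝ), Real.sin (s * x) * Real.exp (-(a * x)) = s / (a ^ 2 + s ^ 2) := by
  have hpos : 0 < a ^ 2 + s ^ 2 := by positivity
  set F : ℝ → ℝ := fun x =>
    -(Real.exp (-(a * x)) * (a * Real.sin (s * x) + s * Real.cos (s * x))) / (a ^ 2 + s ^ 2) with hF
  have hderiv : ∀ x ∈ Set.Ici (0:ℝ), HasDerivAt F (Real.sin (s * x) * Real.exp (-(a * x))) x := by
    intro x _
    have he : HasDerivAt (fun x : ℝ => Real.exp (-(a * x))) (-a * Real.exp (-(a * x))) x := by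
      have : HasDerivAt (fun x : ℝ => -(a * x)) (-a) x := by
        exact ((hasDerivAt_id' x).const_mul a).neg.congr_deriv (by ring)
      simpa [mul_comm] using this.exp
    have hs : HasDerivAt (fun x : ℝ => Real.sin (s * x)) (Real.cos (s * x) * s) x := by
      have : HasDerivAt (fun x : ℝ => s * x) s x := by
        simpa using (hasDerivAt_id x).const_mul s
      simpa using this.sin
    have hc : HasDerivAt (fun x : ℝ => Real.cos (s * x)) (-Real.sin (s * x) * s) x := by
      have : HasDerivAt (fun x : ℝ => s * x) s x := by
        simpa using (hasDerivAt_id x).const_mul s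
      simpa using this.cos
    have h2 : HasDerivAt (fun x : ℝ => a * Real.sin (s * x) + s * Real.cos (s * x))
        (a * (Real.cos (s * x) * s) + s * (-Real.sin (s * x) * s)) x :=
      ((hs.const_mul a).add (hc.const_mul s))
    have h3 := ((he.mul h2).neg).div_const (a ^ 2 + s ^ 2)
    refine HasDerivAt.congr_deriv h3 ?_
    field_simp
    ring
  have htend : Tendsto F atTop (𝓝 0) := by
    refine squeeze_zero_norm (a := fun x => (a + |s|) / (a ^ 2 + s ^ 2) * Real.exp (-(a * x))) (fun x => ?_) ?_
    · show _ ≤ (a + |s|) / (a ^ 2 + s ^ 2) * Real.exp (-(a * x))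
      rw [hF]
      rw [Real.norm_eq_abs, abs_div, abs_neg, abs_mul, abs_of_pos hpos, Real.abs_exp,
        div_mul_eq_mul_div, mul_comm (a + |s|)]
      gcongr
      calc |a * Real.sin (s*x) + s * Real.cos (s*x)| ≤ |a * Real.sin (s*x)| + |s * Real.cos (s*x)| := abs_add_le _ _
        _ ≤ a + |s| := by
            rw [abs_mul, abs_mul, abs_of_pos ha]
            have h1 := Real.abs_sin_le_one (s*x)
            have h2 := Real.abs_cos_le_one (s*x)
            nlinarith [abs_nonneg s]
    · have : Tendsto (fun x : ℝ => Real.exp (-(a * x))) atTop (𝓝 0) := by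
        have h1 : Tendsto (fun x : ℝ => a * x) atTop atTop := tendsto_id.const_mul_atTop ha
        have h2 : Tendsto ((fun y : ℝ => Real.exp (-y)) ∘ (fun x : ℝ => a * x)) atTop (𝓝 0) :=
          Real.tendsto_exp_neg_atTop_nhds_zero.comp h1
        simpa [Function.comp_def] using h2
      simpa using this.const_mul ((a + |s|) / (a ^ 2 + s ^ 2))
  have := integral_Ioi_of_hasDerivAt_of_tendsto' hderiv hint htend
  rw [this, hF]
  simp
  field_simp

lemma aux_outer (a t : ℝ) (ha : 0 < a) :
    ∫ s in (0:ℝ)..t, s / (a ^ 2 + s ^ 2) = (1/2) * Real.log (1 + t ^ 2 / a ^ 2) := by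
  have hderiv : ∀ s ∈ Set.uIcc (0:ℝ) t,
      HasDerivAt (fun s : ℝ => (1/2) * Real.log (a ^ 2 + s ^ 2)) (s / (a ^ 2 + s ^ 2)) s := by
    intro s _
    have hpos : (0:ℝ) < a ^ 2 + s ^ 2 := by positivity
    have h1 : HasDerivAt (fun s : ℝ => a ^ 2 + s ^ 2) (2 * s) s := by
      simpa using ((hasDerivAt_pow 2 s).const_add (a ^ 2))
    have := (h1.log hpos.ne').const_mul (1/2 : ℝ)
    refine HasDerivAt.congr_deriv this ?_
    field_simp
  have hcont : IntervalIntegrable (fun s : ℝ => s / (a ^ 2 + s ^ 2)) volume 0 t := by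
    apply Continuous.intervalIntegrable
    have : ∀ s : ℝ, a ^ 2 + s ^ 2 ≠ 0 := fun s => by positivity
    exact continuous_id.div (by continuity) this
  rw [intervalIntegral.integral_eq_sub_of_hasDerivAt hderiv hcont]
  have h0 : (0:ℝ) < a ^ 2 := by positivity
  have ht2 : (0:ℝ) < a ^ 2 + t ^ 2 := by positivity
  rw [show a ^ 2 + (0:ℝ) ^ 2 = a ^ 2 by ring]
  rw [show (1:ℝ) + t ^ 2 / a ^ 2 = (a ^ 2 + t ^ 2) / a ^ 2 by field_simp]
  rw [Real.log_div ht2.ne' h0.ne']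
  ring

lemma aux_inner_s (x t : ℝ) (hx : x ≠ 0) :
    ∫ s in (0:ℝ)..t, Real.sin (s * x) = (1 - Real.cos (t * x)) / x := by
  have hd : ∀ s ∈ Set.uIcc (0:ℝ) t,
      HasDerivAt (fun s : ℝ => -Real.cos (s * x) / x) (Real.sin (s * x)) s := by
    intro s _
    have h1 : HasDerivAt (fun s : ℝ => s * x) x s := hasDerivAt_mul_const x
    have := (h1.cos.neg).div_const x
    refine HasDerivAt.congr_deriv this ?_
    field_simp
  rw [intervalIntegral.integral_eq_sub_of_hasDerivAt hd
    ((Real.continuous_sin.comp (continuous_mul_right x)).intervalIntegrable 0 t)]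
  simp
  field_simp
  ring

lemma aux_cos_abs (u : ℝ) : |Real.cos u - 1| ≤ |u| := by
  have h1 : Real.cos u - 1 ≤ 0 := by linarith [Real.cos_le_one u]
  rw [abs_of_nonpos h1]
  have h2 : Real.sin (u/2) ^ 2 = 1/2 - Real.cos u / 2 := by
    have := Real.sin_sq_eq_half_sub (u/2)
    rwa [show 2 * (u/2) = u by ring] at this
  have h3 : |Real.sin (u/2)| ≤ |u/2| := Real.abs_sin_le_abs
  have h4 : |Real.sin (u/2)| ≤ 1 := Real.abs_sin_le_one _
  have h5 : Real.sin (u/2) ^ 2 = |Real.sin (u/2)| * |Real.sin (u/2)| := by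
    rw [abs_mul_abs_self, sq]
  have h6 : |u/2| = |u|/2 := by rw [abs_div]; norm_num
  nlinarith [abs_nonneg (Real.sin (u/2)), abs_nonneg u]

lemma aux_termA (a t : ℝ) (ha : 0 < a) (ht : 0 < t) :
    IntegrableOn (fun x : ℝ => (Real.cos (t * x) - 1) * Real.exp (-(a * x)) / x) (Set.Ioi 0) ∧
    ∫ x in Set.Ioi (0:ℝ), (Real.cos (t * x) - 1) * Real.exp (-(a * x)) / x
      = -((1/2) * Real.log (1 + t ^ 2 / a ^ 2)) := by
  have hmeas : AEStronglyMeasurable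
      (fun x : ℝ => (Real.cos (t * x) - 1) * Real.exp (-(a * x)) / x)
      (volume.restrict (Set.Ioi 0)) := by
    apply Measurable.aestronglyMeasurable
    exact (((Real.measurable_cos.comp (measurable_id.const_mul t)).sub measurable_const).mul
      (Real.measurable_exp.comp (measurable_id.const_mul a).neg)).div measurable_id
  have hint : IntegrableOn (fun x : ℝ => (Real.cos (t * x) - 1) * Real.exp (-(a * x)) / x)
      (Set.Ioi 0) := by
    have hdom : Integrable (fun x : ℝ => t * Real.exp (-(a * x))) (volume.restrict (Set.Ioi 0)) := by
      have : IntegrableOn (fun x : ℝ => Real.exp (-a * x)) (Set.Ioi 0) :=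
        exp_neg_integrableOn_Ioi 0 ha
      simpa [neg_mul] using this.const_mul t
    refine hdom.mono' hmeas ?_
    filter_upwards [ae_restrict_mem measurableSet_Ioi] with x hx
    have hx0 : (0:ℝ) < x := hx
    rw [Real.norm_eq_abs, abs_div, abs_mul, Real.abs_exp, abs_of_pos hx0]
    rw [div_le_iff₀ hx0]
    have h1 : |Real.cos (t * x) - 1| ≤ t * x := by
      calc |Real.cos (t * x) - 1| ≤ |t * x| := aux_cos_abs _
        _ = t * x := abs_of_pos (by positivity)
    calc |Real.cos (t * x) - 1| * Real.exp (-(a * x)) ≤ (t * x) * Real.exp (-(a * x)) := by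
          gcongr
      _ = t * Real.exp (-(a * x)) * x := by ring
  refine ⟨hint, ?_⟩
  -- Fubini setup
  set μ := volume.restrict (Set.Ioc (0:ℝ) t) with hμ
  set ν := volume.restrict (Set.Ioi (0:ℝ)) with hν
  have hprod : Integrable
      (Function.uncurry fun s x : ℝ => Real.sin (s * x) * Real.exp (-(a * x))) (μ.prod ν) := by
    have hb : Integrable (fun p : ℝ × ℝ => (1:ℝ) * Real.exp (-(a * p.2))) (μ.prod ν) := by
      refine Integrable.mul_prod (f := fun _ : ℝ => (1:ℝ))
        (g := fun x : ℝ => Real.exp (-(a * x))) ?_ ?_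
      · exact integrableOn_const measure_Ioc_lt_top.ne
      · have : IntegrableOn (fun x : ℝ => Real.exp (-a * x)) (Set.Ioi 0) :=
          exp_neg_integrableOn_Ioi 0 ha
        simp only [neg_mul] at this; exact this
    refine hb.mono' ?_ (ae_of_all _ fun p => ?_)
    · apply Continuous.aestronglyMeasurable
      exact (Real.continuous_sin.comp (continuous_fst.mul continuous_snd)).mul
        (Real.continuous_exp.comp ((continuous_const.mul continuous_snd).neg))
    · simp only [Function.uncurry, norm_mul, Real.norm_eq_abs, Real.abs_exp, one_mul]
      exact mul_le_of_le_one_left (Real.exp_pos _).le (Real.abs_sin_le_one _)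
  have swap := MeasureTheory.integral_integral_swap hprod
  -- LHS of swap
  have hL : ∫ s in Set.Ioc (0:ℝ) t, ∫ x in Set.Ioi (0:ℝ),
      Real.sin (s * x) * Real.exp (-(a * x)) = (1/2) * Real.log (1 + t ^ 2 / a ^ 2) := by
    rw [setIntegral_congr_fun measurableSet_Ioc
      (fun s _ => aux_integral_sin_exp a s ha (aux_integrable_sin_exp a s ha))]
    rw [← intervalIntegral.integral_of_le ht.le]
    exact aux_outer a t ha
  -- RHS of swap inner value
  have hR : ∫ x in Set.Ioi (0:ℝ), (Real.cos (t * x) - 1) * Real.exp (-(a * x)) / x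
      = -∫ x in Set.Ioi (0:ℝ), ∫ s in Set.Ioc (0:ℝ) t,
          Real.sin (s * x) * Real.exp (-(a * x)) := by
    rw [← integral_neg]
    refine setIntegral_congr_fun measurableSet_Ioi fun x hx => ?_
    have hx0 : (0:ℝ) < x := hx
    have hinner : ∫ s in Set.Ioc (0:ℝ) t, Real.sin (s * x) * Real.exp (-(a * x))
        = (1 - Real.cos (t * x)) / x * Real.exp (-(a * x)) := by
      rw [← intervalIntegral.integral_of_le ht.le, intervalIntegral.integral_mul_const,
        aux_inner_s x t hx0.ne']
    rw [hinner]
    field_simp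
    ring
  rw [hR, swap.symm, hL]

lemma aux_summable (t : ℝ) :
    Summable (fun n : ℕ => Real.log (1 + t ^ 2 / (((n:ℝ) + 1) ^ 2 * π ^ 2))) := by
  have hsum : Summable (fun n : ℕ => t ^ 2 / π ^ 2 * (1 / ((n:ℝ) + 1) ^ 2)) := by
    have h1 : Summable (fun n : ℕ => 1 / ((n:ℝ)) ^ 2) :=
      (Real.summable_one_div_nat_pow).mpr one_lt_two
    have h2 : Summable (fun n : ℕ => 1 / ((n:ℝ) + 1) ^ 2) := by
      have := (summable_nat_add_iff 1).mpr h1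
      simpa using this
    exact h2.mul_left _
  refine Summable.of_nonneg_of_le (fun n => ?_) (fun n => ?_) hsum
  · apply Real.log_nonneg
    have : 0 ≤ t ^ 2 / (((n:ℝ) + 1) ^ 2 * π ^ 2) := by positivity
    linarith
  · have hpos : (0:ℝ) < 1 + t ^ 2 / (((n:ℝ) + 1) ^ 2 * π ^ 2) := by positivity
    calc Real.log (1 + t ^ 2 / (((n:ℝ) + 1) ^ 2 * π ^ 2))
        ≤ (1 + t ^ 2 / (((n:ℝ) + 1) ^ 2 * π ^ 2)) - 1 := Real.log_le_sub_one_of_pos hpos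
      _ = t ^ 2 / π ^ 2 * (1 / ((n:ℝ) + 1) ^ 2) := by
          have hn : ((n:ℝ) + 1) ^ 2 ≠ 0 := by positivity
          have hp : (π:ℝ) ^ 2 ≠ 0 := by positivity
          field_simp
          ring

lemma aux_prod_tendsto (t : ℝ) (ht : 0 < t) :
    Tendsto (fun n : ℕ => ∏ j ∈ Finset.range n, (1 + t ^ 2 / (((j:ℝ) + 1) ^ 2 * π ^ 2)))
      atTop (𝓝 (Real.sinh t / t)) := by
  have hπ : (π : ℂ) ≠ 0 := Complex.ofReal_ne_zero.mpr Real.pi_ne_zero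
  set z : ℂ := (t : ℂ) * Complex.I / (π : ℂ) with hzdef
  have hπz : (π : ℂ) * z = (t : ℂ) * Complex.I := by
    rw [hzdef, mul_div_cancel₀]
    exact hπ
  have hz2 : z ^ 2 = -((t:ℂ) ^ 2 / (π:ℂ) ^ 2) := by
    rw [hzdef, div_pow, mul_pow, Complex.I_sq]; ring
  have hfac : ∀ j : ℕ, (1:ℂ) - z ^ 2 / ((j:ℂ) + 1) ^ 2
      = ((1 + t ^ 2 / (((j:ℝ) + 1) ^ 2 * π ^ 2) : ℝ) : ℂ) := by
    intro j
    have hj : ((j:ℂ) + 1) ≠ 0 := Nat.cast_add_one_ne_zero j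
    rw [hz2]
    push_cast
    field_simp
    ring
  have h1 : Tendsto (fun n : ℕ => (t:ℂ) * Complex.I *
      ((∏ j ∈ Finset.range n, (1 + t ^ 2 / (((j:ℝ) + 1) ^ 2 * π ^ 2)) : ℝ) : ℂ)) atTop
      (𝓝 ((Real.sinh t : ℂ) * Complex.I)) := by
    have hz := Complex.tendsto_euler_sin_prod z
    rw [hπz] at hz
    have heq : ∀ n : ℕ, (t:ℂ) * Complex.I * ∏ j ∈ Finset.range n, ((1:ℂ) - z ^ 2 / ((j:ℂ) + 1) ^ 2)
        = (t:ℂ) * Complex.I *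
          ((∏ j ∈ Finset.range n, (1 + t ^ 2 / (((j:ℝ) + 1) ^ 2 * π ^ 2)) : ℝ) : ℂ) := by
      intro n
      rw [Complex.ofReal_prod]
      congr 1
      exact Finset.prod_congr rfl fun j _ => hfac j
    have hlim : Complex.sin ((t:ℂ) * Complex.I) = (Real.sinh t : ℂ) * Complex.I := by
      rw [Complex.sin_mul_I, Complex.ofReal_sinh]
    rw [hlim] at hz
    exact hz.congr heq
  have hti : (t:ℂ) * Complex.I ≠ 0 := by
    simp [Complex.I_ne_zero, Complex.ofReal_ne_zero.mpr ht.ne']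
  have hcont : Continuous (fun w : ℂ => (w / ((t:ℂ) * Complex.I)).re) :=
    Complex.continuous_re.comp (continuous_id.div_const _)
  have h2 := (hcont.tendsto _).comp h1
  simp only [Function.comp_def] at h2
  have h3 : ∀ n : ℕ, (((t:ℂ) * Complex.I *
      ((∏ j ∈ Finset.range n, (1 + t ^ 2 / (((j:ℝ) + 1) ^ 2 * π ^ 2)) : ℝ) : ℂ)) /
        ((t:ℂ) * Complex.I)).re
      = ∏ j ∈ Finset.range n, (1 + t ^ 2 / (((j:ℝ) + 1) ^ 2 * π ^ 2)) := by
    intro n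
    rw [mul_comm ((t:ℂ) * Complex.I), mul_div_assoc, div_self hti, mul_one, Complex.ofReal_re]
  have h4 : (((Real.sinh t : ℂ) * Complex.I) / ((t:ℂ) * Complex.I)).re = Real.sinh t / t := by
    rw [mul_div_mul_right _ _ Complex.I_ne_zero, ← Complex.ofReal_div, Complex.ofReal_re]
  rw [h4] at h2
  exact h2.congr h3

lemma aux_hasSum_log (t : ℝ) (ht : 0 < t) :
    HasSum (fun n : ℕ => Real.log (1 + t ^ 2 / (((n:ℝ) + 1) ^ 2 * π ^ 2)))
      (Real.log (Real.sinh t / t)) := by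
  obtain ⟨l, hl⟩ := aux_summable t
  have hpartial := hl.tendsto_sum_nat
  have hpos : ∀ j : ℕ, (0:ℝ) < 1 + t ^ 2 / (((j:ℝ) + 1) ^ 2 * π ^ 2) := fun j => by positivity
  have hlog : ∀ n : ℕ, ∑ j ∈ Finset.range n, Real.log (1 + t ^ 2 / (((j:ℝ) + 1) ^ 2 * π ^ 2))
      = Real.log (∏ j ∈ Finset.range n, (1 + t ^ 2 / (((j:ℝ) + 1) ^ 2 * π ^ 2))) := by
    intro n
    rw [Real.log_prod fun j _ => (hpos j).ne']
  have hquot : (0:ℝ) < Real.sinh t / t := div_pos (Real.sinh_pos_iff.mpr ht) ht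
  have htendlog : Tendsto
      (fun n : ℕ => ∑ j ∈ Finset.range n, Real.log (1 + t ^ 2 / (((j:ℝ) + 1) ^ 2 * π ^ 2)))
      atTop (𝓝 (Real.log (Real.sinh t / t))) := by
    have := ((Real.continuousAt_log hquot.ne').tendsto).comp (aux_prod_tendsto t ht)
    simp only [Function.comp_def] at this
    exact this.congr fun n => (hlog n).symm
  have : l = Real.log (Real.sinh t / t) := tendsto_nhds_unique hpartial htendlog
  rwa [this] at hl

lemma aux_geom (x : ℝ) (hx : 0 < x) :
    HasSum (fun n : ℕ => Real.exp (-((((n:ℝ) + 1) * π) * x)))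
      (1 / (Real.exp (π * x) - 1)) := by
  have hπx : 0 < π * x := by positivity
  have hr0 : (0:ℝ) ≤ Real.exp (-(π * x)) := (Real.exp_pos _).le
  have hr1 : Real.exp (-(π * x)) < 1 := by
    rw [← Real.exp_zero]
    exact Real.exp_lt_exp.mpr (by linarith)
  have h := (hasSum_geometric_of_lt_one hr0 hr1).mul_left (Real.exp (-(π * x)))
  have hE1 : (1:ℝ) < Real.exp (π * x) := Real.one_lt_exp_iff.mpr hπx
  have hval : Real.exp (-(π * x)) * (1 - Real.exp (-(π * x)))⁻¹
      = 1 / (Real.exp (π * x) - 1) := by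
    rw [Real.exp_neg]
    have hE0 : Real.exp (π * x) ≠ 0 := (Real.exp_pos _).ne'
    have h1ne : 1 - (Real.exp (π * x))⁻¹ ≠ 0 := by
      have : (Real.exp (π * x))⁻¹ < 1 := by
        rw [inv_lt_one_iff₀]; right; exact hE1
      linarith
    have hEne : Real.exp (π * x) - 1 ≠ 0 := by linarith
    field_simp
  rw [hval] at h
  have hfun : (fun n : ℕ => Real.exp (-(π * x)) * Real.exp (-(π * x)) ^ n)
      = fun n : ℕ => Real.exp (-((((n:ℝ) + 1) * π) * x)) := by
    funext n
    rw [← Real.exp_nat_mul, ← Real.exp_add]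
    congr 1
    ring
  rwa [hfun] at h

lemma aux_main_pos (t : ℝ) (ht : 0 < t) :
    IntegrableOn
      (fun x : ℝ => (Real.cos (t * x) - 1) * (2 / (x * (Real.exp (π * x) - 1))))
      (Set.Ioi 0) ∧
    (∫ x in Set.Ioi (0 : ℝ), (Real.cos (t * x) - 1) * (2 / (x * (Real.exp (π * x) - 1))))
      = Real.log (t / Real.sinh t) := by
  set F : ℝ → ℝ := fun x => (Real.cos (t * x) - 1) * (2 / (x * (Real.exp (π * x) - 1))) with hF
  set f : ℕ → ℝ → ℝ := fun n x =>
    2 * ((Real.cos (t * x) - 1) * Real.exp (-((((n:ℝ) + 1) * π) * x)) / x) with hf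
  have hapos : ∀ n : ℕ, (0:ℝ) < ((n:ℝ) + 1) * π := fun n => by positivity
  have hA := fun n : ℕ => aux_termA (((n:ℝ) + 1) * π) t (hapos n) ht
  have hsq : ∀ n : ℕ, (((n:ℝ) + 1) * π) ^ 2 = ((n:ℝ) + 1) ^ 2 * π ^ 2 := fun n => by ring
  -- integral of each term
  have hfint : ∀ n : ℕ, IntegrableOn (f n) (Set.Ioi 0) := fun n => ((hA n).1.const_mul 2)
  have hfval : ∀ n : ℕ, ∫ x in Set.Ioi (0:ℝ), f n x
      = -Real.log (1 + t ^ 2 / (((n:ℝ) + 1) ^ 2 * π ^ 2)) := by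
    intro n
    rw [hf]
    simp only []
    rw [integral_const_mul, (hA n).2, hsq n]
    ring
  -- each term is nonpositive on Ioi 0
  have hfnonpos : ∀ n : ℕ, ∀ x : ℝ, 0 < x → f n x ≤ 0 := by
    intro n x hx
    rw [hf]
    simp only []
    have h1 : Real.cos (t * x) - 1 ≤ 0 := by linarith [Real.cos_le_one (t * x)]
    have h2 : 0 < Real.exp (-((((n:ℝ) + 1) * π) * x)) := Real.exp_pos _
    have : (Real.cos (t * x) - 1) * Real.exp (-((((n:ℝ) + 1) * π) * x)) / x ≤ 0 := by
      apply div_nonpos_of_nonpos_of_nonneg _ hx.le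
      exact mul_nonpos_of_nonpos_of_nonneg h1 h2.le
    linarith
  -- norm integral of each term
  have hnormval : ∀ n : ℕ, ∫ x in Set.Ioi (0:ℝ), ‖f n x‖
      = Real.log (1 + t ^ 2 / (((n:ℝ) + 1) ^ 2 * π ^ 2)) := by
    intro n
    have : ∫ x in Set.Ioi (0:ℝ), ‖f n x‖ = ∫ x in Set.Ioi (0:ℝ), -(f n x) := by
      refine setIntegral_congr_fun measurableSet_Ioi fun x hx => ?_
      rw [Real.norm_eq_abs, abs_of_nonpos (hfnonpos n x hx)]
    rw [this, integral_neg, hfval n, neg_neg]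
  -- lintegral bound
  have hlint : ∀ n : ℕ, ∫⁻ x in Set.Ioi (0:ℝ), ‖f n x‖₊
      = ENNReal.ofReal (Real.log (1 + t ^ 2 / (((n:ℝ) + 1) ^ 2 * π ^ 2))) := by
    intro n
    simp only [← enorm_eq_nnnorm]; rw [← ofReal_integral_norm_eq_lintegral_enorm (hfint n), hnormval n]
  have hlogsummable := aux_summable t
  have hlognonneg : ∀ n : ℕ, 0 ≤ Real.log (1 + t ^ 2 / (((n:ℝ) + 1) ^ 2 * π ^ 2)) := by
    intro n
    apply Real.log_nonneg
    have : 0 ≤ t ^ 2 / (((n:ℝ) + 1) ^ 2 * π ^ 2) := by positivity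
    linarith
  have hlsum : ∑' n : ℕ, ∫⁻ x in Set.Ioi (0:ℝ), ‖f n x‖₊ ≠ ⊤ := by
    have : ∑' n : ℕ, ∫⁻ x in Set.Ioi (0:ℝ), ‖f n x‖₊
        = ENNReal.ofReal (∑' n : ℕ, Real.log (1 + t ^ 2 / (((n:ℝ) + 1) ^ 2 * π ^ 2))) := by
      rw [ENNReal.ofReal_tsum_of_nonneg hlognonneg hlogsummable]
      exact tsum_congr hlint
    rw [this]
    exact ENNReal.ofReal_ne_top
  -- pointwise sum
  have hptsum : ∀ x : ℝ, 0 < x → HasSum (fun n : ℕ => f n x) (F x) := by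
    intro x hx
    have hgeom := aux_geom x hx
    have h := hgeom.mul_left ((Real.cos (t * x) - 1) * 2 / x)
    have hE1 : (1:ℝ) < Real.exp (π * x) := Real.one_lt_exp_iff.mpr (by positivity)
    have hEne : Real.exp (π * x) - 1 ≠ 0 := by linarith
    have hfun : (fun n : ℕ => (Real.cos (t * x) - 1) * 2 / x
        * Real.exp (-((((n:ℝ) + 1) * π) * x))) = fun n : ℕ => f n x := by
      funext n
      rw [hf]
      simp only []
      ring
    have hval2 : (Real.cos (t * x) - 1) * 2 / x * (1 / (Real.exp (π * x) - 1)) = F x := by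
      rw [hF]
      simp only []
      field_simp
    rw [hfun, hval2] at h
    exact h
  have hmeasf : ∀ n : ℕ, AEStronglyMeasurable (f n) (volume.restrict (Set.Ioi 0)) :=
    fun n => (hfint n).aestronglyMeasurable
  -- measurability of F
  have hmeasF : AEStronglyMeasurable F (volume.restrict (Set.Ioi 0)) := by
    apply Measurable.aestronglyMeasurable
    rw [hF]
    apply Measurable.mul
    · exact (Real.measurable_cos.comp (measurable_id.const_mul t)).sub measurable_const
    · exact measurable_const.div
        (measurable_id.mul ((Real.measurable_exp.comp (measurable_id.const_mul π)).sub
          measurable_const))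
  -- F agrees a.e. with the series
  have haeeq : F =ᵐ[volume.restrict (Set.Ioi 0)] fun x => ∑' n : ℕ, f n x := by
    filter_upwards [ae_restrict_mem measurableSet_Ioi] with x hx
    exact ((hptsum x hx).tsum_eq).symm
  -- Integrability of F
  have hFint : IntegrableOn F (Set.Ioi 0) := by
    refine ⟨hmeasF, ?_⟩
    rw [hasFiniteIntegral_iff_norm]
    have hnormae : (fun x : ℝ => ENNReal.ofReal ‖F x‖)
        =ᵐ[volume.restrict (Set.Ioi 0)] fun x => ∑' n : ℕ, ENNReal.ofReal ‖f n x‖ := by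
      filter_upwards [ae_restrict_mem measurableSet_Ioi] with x hx
      have hsummable : Summable fun n : ℕ => f n x := (hptsum x hx).summable
      have h1 : F x = -∑' n : ℕ, -(f n x) := by
        rw [tsum_neg, neg_neg]
        exact ((hptsum x hx).tsum_eq).symm
      have h2 : 0 ≤ ∑' n : ℕ, -(f n x) :=
        tsum_nonneg fun n => neg_nonneg.mpr (hfnonpos n x hx)
      have h3 : ‖F x‖ = ∑' n : ℕ, -(f n x) := by
        rw [h1, norm_neg, Real.norm_eq_abs, abs_of_nonneg h2]
      rw [h3, ENNReal.ofReal_tsum_of_nonneg (fun n => neg_nonneg.mpr (hfnonpos n x hx))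
        hsummable.neg]
      congr 1
      funext n
      rw [Real.norm_eq_abs, abs_of_nonpos (hfnonpos n x hx)]
    rw [lintegral_congr_ae hnormae]
    have : ∫⁻ x in Set.Ioi (0:ℝ), ∑' n : ℕ, ENNReal.ofReal ‖f n x‖
        = ∑' n : ℕ, ∫⁻ x in Set.Ioi (0:ℝ), ENNReal.ofReal ‖f n x‖ :=
      lintegral_tsum fun n => ((hmeasf n).norm.aemeasurable.ennreal_ofReal)
    rw [this]
    have heq : ∀ n : ℕ, ∫⁻ x in Set.Ioi (0:ℝ), ENNReal.ofReal ‖f n x‖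
        = ∫⁻ x in Set.Ioi (0:ℝ), (‖f n x‖₊ : ENNReal) := by
      intro n
      congr 1
      funext x
      exact ofReal_norm _
    rw [tsum_congr heq]
    exact lt_top_iff_ne_top.mpr hlsum
  refine ⟨hFint, ?_⟩
  -- compute the integral
  calc ∫ x in Set.Ioi (0:ℝ), F x
      = ∫ x in Set.Ioi (0:ℝ), ∑' n : ℕ, f n x := integral_congr_ae haeeq
    _ = ∑' n : ℕ, ∫ x in Set.Ioi (0:ℝ), f n x := integral_tsum hmeasf hlsum
    _ = ∑' n : ℕ, -Real.log (1 + t ^ 2 / (((n:ℝ) + 1) ^ 2 * π ^ 2)) := tsum_congr hfval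
    _ = -(∑' n : ℕ, Real.log (1 + t ^ 2 / (((n:ℝ) + 1) ^ 2 * π ^ 2))) := by rw [tsum_neg]
    _ = -Real.log (Real.sinh t / t) := by rw [(aux_hasSum_log t ht).tsum_eq]
    _ = Real.log (t / Real.sinh t) := by
        rw [← Real.log_inv, inv_div]

/-- for every real `t ≠ 0`, the integral
`∫_0^∞ (cos(tx) − 1)·2/(x·(e^{πx} − 1)) dx` converges and equals `log(t/sinh(t))`. -/
theorem hyperbolic_sine_levy_exponent (t : ℝ) (ht : t ≠ 0) :
    IntegrableOn
      (fun x : ℝ => (Real.cos (t * x) - 1) * (2 / (x * (Real.exp (π * x) - 1))))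
      (Set.Ioi 0) ∧
    (∫ x in Set.Ioi (0 : ℝ), (Real.cos (t * x) - 1) * (2 / (x * (Real.exp (π * x) - 1))))
      = Real.log (t / Real.sinh t) := by
  rcases ht.lt_or_gt with htneg | htpos
  · have h := aux_main_pos (-t) (by linarith)
    have hfun : (fun x : ℝ => (Real.cos (-t * x) - 1) * (2 / (x * (Real.exp (π * x) - 1))))
        = fun x : ℝ => (Real.cos (t * x) - 1) * (2 / (x * (Real.exp (π * x) - 1))) := by
      funext x
      rw [neg_mul, Real.cos_neg]
    have hlog : Real.log (-t / Real.sinh (-t)) = Real.log (t / Real.sinh t) := by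
      rw [Real.sinh_neg, neg_div_neg_eq]
    rw [hfun, hlog] at h
    exact h
  · exact aux_main_pos t htpos
end

section
/- For every real t, the integral ∫_0^∞ (cos(tx) − 1)/(x·sinh(πx/2)) dx converges and equals −log(cosh(t)). -/
open Real MeasureTheory Filter Set Topology Function

lemma prod_range_two_mul {M : Type*} [CommMonoid M] (g : ℕ → M) (N : ℕ) :
    ∏ j ∈ Finset.range (2 * N), g j
      = (∏ k ∈ Finset.range N, g (2 * k)) * ∏ k ∈ Finset.range N, g (2 * k + 1) := by
  induction N with
  | zero => simp
  | succ n ih =>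
    rw [show 2*(n+1) = 2*n+1+1 by ring, Finset.prod_range_succ, Finset.prod_range_succ, ih,
      Finset.prod_range_succ, Finset.prod_range_succ]
    rw [mul_assoc, ← mul_mul_mul_comm]

lemma cosh_prod (t : ℝ) (ht : t ≠ 0) :
    Tendsto (fun N : ℕ => ∏ j ∈ Finset.range N, (1 + 4 * t ^ 2 / (π ^ 2 * (2 * j + 1) ^ 2)))
      atTop (𝓝 (Real.cosh t)) := by
  have hπ : (π : ℝ) ≠ 0 := Real.pi_ne_zero
  set w : ℂ := (t : ℂ) * Complex.I / (π : ℂ) with hw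
  have hπC : (π : ℂ) ≠ 0 := Complex.ofReal_ne_zero.mpr hπ
  have hπw : (π : ℂ) * w = (t : ℂ) * Complex.I := by
    rw [hw]
    field_simp
  have hw2 : w ^ 2 = ((-(t ^ 2) / π ^ 2 : ℝ) : ℂ) := by
    rw [hw]
    push_cast
    rw [div_pow, mul_pow, Complex.I_sq]
    ring
  -- factors of B are real positive
  have hBfac : ∀ j : ℕ, (1 : ℂ) - w ^ 2 / ((j : ℂ) + 1) ^ 2
      = ((1 + t ^ 2 / (π ^ 2 * ((j : ℝ) + 1) ^ 2) : ℝ) : ℂ) := by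
    intro j
    have hj : ((j : ℂ) + 1) ≠ 0 := Nat.cast_add_one_ne_zero j
    rw [hw2]
    push_cast
    field_simp
    ring
  have hBfac_ne : ∀ j : ℕ, (1 : ℂ) - w ^ 2 / ((j : ℂ) + 1) ^ 2 ≠ 0 := by
    intro j
    rw [hBfac j]
    have h0 : (0:ℝ) < 1 + t ^ 2 / (π ^ 2 * ((j : ℝ) + 1) ^ 2) := by positivity
    exact_mod_cast ne_of_gt h0
  have hsin_ne : Complex.sin ((t:ℂ) * Complex.I) ≠ 0 := by
    rw [Complex.sin_mul_I]
    apply mul_ne_zero _ Complex.I_ne_zero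
    rw [← Complex.ofReal_sinh]
    exact Complex.ofReal_ne_zero.mpr (Real.sinh_ne_zero.mpr ht)
  have hsin_ne' : Complex.sin ((π:ℂ) * w) ≠ 0 := by rw [hπw]; exact hsin_ne
  have hB : Tendsto (fun N : ℕ => (π:ℂ) * w * ∏ j ∈ Finset.range N,
      ((1 : ℂ) - w ^ 2 / ((j : ℂ) + 1) ^ 2)) atTop (𝓝 (Complex.sin ((π:ℂ) * w))) :=
    Complex.tendsto_euler_sin_prod w
  have hA : Tendsto (fun N : ℕ => (π:ℂ) * (2*w) * ∏ j ∈ Finset.range (2*N),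
      ((1 : ℂ) - (2*w) ^ 2 / ((j : ℂ) + 1) ^ 2)) atTop (𝓝 (Complex.sin ((π:ℂ) * (2*w)))) :=
    (Complex.tendsto_euler_sin_prod (2*w)).comp
      (tendsto_id.const_mul_atTop' (two_pos))
  have hBne : ∀ N : ℕ, ((π:ℂ) * w * ∏ j ∈ Finset.range N,
      ((1 : ℂ) - w ^ 2 / ((j : ℂ) + 1) ^ 2)) ≠ 0 := by
    intro N
    apply mul_ne_zero
    · rw [hπw]
      exact mul_ne_zero (Complex.ofReal_ne_zero.mpr ht) Complex.I_ne_zero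
    · exact Finset.prod_ne_zero_iff.mpr fun j _ => hBfac_ne j
  have hkey : ∀ N : ℕ, ((∏ j ∈ Finset.range N,
        (1 + 4 * t ^ 2 / (π ^ 2 * (2 * (j:ℝ) + 1) ^ 2)) : ℝ) : ℂ)
      = ((π:ℂ) * (2*w) * ∏ j ∈ Finset.range (2*N),
          ((1 : ℂ) - (2*w) ^ 2 / ((j : ℂ) + 1) ^ 2))
        / (2 * ((π:ℂ) * w * ∏ j ∈ Finset.range N,
          ((1 : ℂ) - w ^ 2 / ((j : ℂ) + 1) ^ 2))) := by
    intro N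
    rw [eq_div_iff (mul_ne_zero two_ne_zero (hBne N))]
    rw [prod_range_two_mul (fun j => (1 : ℂ) - (2*w) ^ 2 / ((j : ℂ) + 1) ^ 2) N]
    have h2w2 : (2*w) ^ 2 = ((-(4 * t ^ 2) / π ^ 2 : ℝ) : ℂ) := by
      rw [mul_pow, hw2]; push_cast; ring
    have h1 : ∀ k : ℕ, (1 : ℂ) - (2*w) ^ 2 / (((2*k : ℕ) : ℂ) + 1) ^ 2
        = ((1 + 4 * t ^ 2 / (π ^ 2 * (2 * (k:ℝ) + 1) ^ 2) : ℝ) : ℂ) := by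
      intro k
      have hk : ((2*k+1 : ℕ) : ℂ) ≠ 0 := Nat.cast_ne_zero.mpr (by omega)
      push_cast at hk ⊢
      rw [h2w2]
      push_cast
      field_simp
      ring
    have h2 : ∀ k : ℕ, (1 : ℂ) - (2*w) ^ 2 / (((2*k+1 : ℕ) : ℂ) + 1) ^ 2
        = (1 : ℂ) - w ^ 2 / ((k : ℂ) + 1) ^ 2 := by
      intro k
      have hk : ((k:ℂ) + 1) ≠ 0 := Nat.cast_add_one_ne_zero k
      have hk2 : ((2*k+1 : ℕ) : ℂ) + 1 = 2 * ((k:ℂ) + 1) := by push_cast; ring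
      rw [hk2, mul_pow, mul_pow]
      rw [mul_div_mul_left _ _ (by norm_num : (2:ℂ)^2 ≠ 0)]
    rw [Finset.prod_congr rfl fun k _ => h1 k, Finset.prod_congr rfl fun k _ => h2 k]
    push_cast
    ring
  have hlim : Tendsto (fun N : ℕ => ((∏ j ∈ Finset.range N,
        (1 + 4 * t ^ 2 / (π ^ 2 * (2 * (j:ℝ) + 1) ^ 2)) : ℝ) : ℂ)) atTop
      (𝓝 (Complex.sin ((π:ℂ) * (2*w)) / (2 * Complex.sin ((π:ℂ) * w)))) := by
    simp_rw [hkey]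
    exact hA.div (tendsto_const_nhds.mul hB) (mul_ne_zero two_ne_zero hsin_ne')
  have hval : Complex.sin ((π:ℂ) * (2*w)) / (2 * Complex.sin ((π:ℂ) * w))
      = ((Real.cosh t : ℝ) : ℂ) := by
    have h2 : (π:ℂ) * (2*w) = 2 * ((π:ℂ) * w) := by ring
    rw [h2, Complex.sin_two_mul, hπw, Complex.cos_mul_I, ← Complex.ofReal_cosh]
    exact mul_div_cancel_left₀ _ (mul_ne_zero two_ne_zero hsin_ne)
  rw [hval] at hlim
  have hre := (Complex.continuous_re.tendsto _).comp hlim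
  simp only [Function.comp_def, Complex.ofReal_re] at hre
  exact hre

lemma integrable_exp_sin (b s : ℝ) (hb : 0 < b) :
    IntegrableOn (fun x : ℝ => Real.exp (-(b*x)) * Real.sin (s*x)) (Set.Ioi 0) := by
  have h := exp_neg_integrableOn_Ioi 0 hb
  apply Integrable.mono' h
  · exact (Measurable.aestronglyMeasurable (by fun_prop))
  · filter_upwards with x
    rw [norm_mul, Real.norm_eq_abs, Real.norm_eq_abs, Real.abs_exp, neg_mul b x]
    calc Real.exp (-(b*x)) * |Real.sin (s*x)| ≤ Real.exp (-(b*x)) * 1 :=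
      mul_le_mul_of_nonneg_left (Real.abs_sin_le_one _) (Real.exp_pos _).le
    _ = Real.exp (-(b*x)) := mul_one _

lemma hasDerivAt_F (b s : ℝ) (x : ℝ) :
    HasDerivAt (fun x : ℝ => -Real.exp (-(b*x)) * (b * Real.sin (s*x) + s * Real.cos (s*x)) / (s^2+b^2))
      ((Real.exp (-(b*x)) * Real.sin (s*x)) * ((s^2+b^2) / (s^2+b^2))) x := by
  have h1 : HasDerivAt (fun x : ℝ => Real.exp (-(b*x))) (Real.exp (-(b*x)) * (-(b*1))) x :=
    (((hasDerivAt_id x).const_mul b).neg).exp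
  have h2 : HasDerivAt (fun x : ℝ => Real.sin (s*x)) (Real.cos (s*x) * (s*1)) x :=
    ((hasDerivAt_id x).const_mul s).sin
  have h3 : HasDerivAt (fun x : ℝ => Real.cos (s*x)) (-Real.sin (s*x) * (s*1)) x :=
    ((hasDerivAt_id x).const_mul s).cos
  have h := ((h1.neg.mul ((h2.const_mul b).add (h3.const_mul s)))).div_const (s^2+b^2)
  refine h.congr_deriv ?_
  simp only [Pi.add_apply, Pi.neg_apply]
  ring

lemma integral_exp_sin (b s : ℝ) (hb : 0 < b) :
    ∫ x in Set.Ioi (0:ℝ), Real.exp (-(b*x)) * Real.sin (s*x) = s / (s^2 + b^2) := by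
  have hd : (0:ℝ) < s^2 + b^2 := by positivity
  have hderiv : ∀ x ∈ Set.Ici (0:ℝ),
      HasDerivAt (fun x : ℝ => -Real.exp (-(b*x)) * (b * Real.sin (s*x) + s * Real.cos (s*x)) / (s^2+b^2))
        (Real.exp (-(b*x)) * Real.sin (s*x)) x := by
    intro x _
    have := hasDerivAt_F b s x
    rwa [div_self hd.ne', mul_one] at this
  have htend : Tendsto (fun x : ℝ => -Real.exp (-(b*x)) * (b * Real.sin (s*x) + s * Real.cos (s*x)) / (s^2+b^2))
      atTop (𝓝 0) := by
    have h1 : Tendsto (fun x : ℝ => Real.exp (-(b*x))) atTop (𝓝 0) := by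
      have : Tendsto (fun x : ℝ => b * x) atTop atTop :=
        Tendsto.const_mul_atTop hb tendsto_id
      simpa [Function.comp_def] using Real.tendsto_exp_neg_atTop_nhds_zero.comp this
    have hbound : ∀ x : ℝ, ‖-Real.exp (-(b*x)) * (b * Real.sin (s*x) + s * Real.cos (s*x)) / (s^2+b^2)‖
        ≤ Real.exp (-(b*x)) * ((b + |s|) / (s^2+b^2)) := by
      intro x
      rw [Real.norm_eq_abs, abs_div, abs_of_pos hd, abs_mul, abs_neg, Real.abs_exp]
      rw [div_le_iff₀ hd]
      have hnum : |b * Real.sin (s*x) + s * Real.cos (s*x)| ≤ b + |s| := by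
        calc |b * Real.sin (s*x) + s * Real.cos (s*x)|
            ≤ |b * Real.sin (s*x)| + |s * Real.cos (s*x)| := abs_add_le _ _
          _ ≤ b * 1 + |s| * 1 := by
              rw [abs_mul, abs_mul, abs_of_pos hb]
              gcongr
              · exact Real.abs_sin_le_one _
              · exact Real.abs_cos_le_one _
          _ = b + |s| := by ring
      calc Real.exp (-(b*x)) * |b * Real.sin (s*x) + s * Real.cos (s*x)|
          ≤ Real.exp (-(b*x)) * (b + |s|) := by gcongr
        _ = Real.exp (-(b*x)) * ((b + |s|) / (s^2+b^2)) * (s^2+b^2) := by field_simp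
    have h2 : Tendsto (fun x : ℝ => Real.exp (-(b*x)) * ((b + |s|) / (s^2+b^2))) atTop (𝓝 0) := by
      simpa using h1.mul_const ((b + |s|) / (s^2+b^2))
    exact squeeze_zero_norm hbound h2
  have key := integral_Ioi_of_hasDerivAt_of_tendsto'
    (f := fun x : ℝ => -Real.exp (-(b*x)) * (b * Real.sin (s*x) + s * Real.cos (s*x)) / (s^2+b^2))
    (f' := fun x : ℝ => Real.exp (-(b*x)) * Real.sin (s*x))
    hderiv (integrable_exp_sin b s hb) htend
  rw [key]
  norm_num
  ring

lemma one_sub_cos_div_le (t x : ℝ) (hx : 0 < x) :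
    (1 - Real.cos (t*x)) / x ≤ max (t^2/2) 2 := by
  rcases le_total x 1 with h1 | h1
  · have : 1 - Real.cos (t*x) ≤ (t*x)^2/2 := by
      have := Real.one_sub_sq_div_two_le_cos (x := t*x)
      linarith
    calc (1 - Real.cos (t*x)) / x ≤ ((t*x)^2/2) / x := by gcongr
      _ = t^2/2 * x := by field_simp
      _ ≤ t^2/2 * 1 := by gcongr
      _ ≤ max (t^2/2) 2 := by rw [mul_one]; exact le_max_left _ _
  · have : 1 - Real.cos (t*x) ≤ 2 := by
      have := Real.neg_one_le_cos (t*x)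
      linarith
    calc (1 - Real.cos (t*x)) / x ≤ 2 / x := by gcongr
      _ ≤ 2 / 1 := by gcongr
      _ ≤ max (t^2/2) 2 := by norm_num

lemma one_sub_cos_div_nonneg (t x : ℝ) (hx : 0 < x) :
    0 ≤ (1 - Real.cos (t*x)) / x := by
  apply div_nonneg _ hx.le
  have := Real.cos_le_one (t*x); linarith

lemma integrable_exp_one_sub_cos (b t : ℝ) (hb : 0 < b) :
    IntegrableOn (fun x : ℝ => Real.exp (-(b*x)) * ((1 - Real.cos (t*x))/x)) (Set.Ioi 0) := by
  have h := (exp_neg_integrableOn_Ioi 0 hb).mul_const (max (t^2/2) 2)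
  apply Integrable.mono' h
  · apply Measurable.aestronglyMeasurable; fun_prop
  · filter_upwards [ae_restrict_mem measurableSet_Ioi] with x hx
    rw [Real.norm_eq_abs, abs_mul, Real.abs_exp, neg_mul,
      abs_of_nonneg (one_sub_cos_div_nonneg t x hx)]
    exact mul_le_mul_of_nonneg_left (one_sub_cos_div_le t x hx) (Real.exp_pos _).le

lemma integral_s_div (b t : ℝ) (hb : 0 < b) :
    ∫ s in (0:ℝ)..t, s / (s^2 + b^2) = (Real.log (t^2+b^2) - Real.log (b^2)) / 2 := by
  have hpos : ∀ s : ℝ, (0:ℝ) < s^2 + b^2 := fun s => by positivity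
  have hderiv : ∀ s ∈ Set.uIcc (0:ℝ) t,
      HasDerivAt (fun s : ℝ => Real.log (s^2+b^2) / 2) (s / (s^2+b^2)) s := by
    intro s _
    have h1 : HasDerivAt (fun s : ℝ => s^2 + b^2) (2*s) s := by
      simpa using (hasDerivAt_pow 2 s).add_const (b^2)
    have h2 := (Real.hasDerivAt_log (hpos s).ne').comp s h1
    have h3 := h2.div_const 2
    refine h3.congr_deriv ?_
    ring
  have hcont : IntervalIntegrable (fun s : ℝ => s / (s^2+b^2)) volume 0 t := by
    apply Continuous.intervalIntegrable
    exact continuous_id.div (by fun_prop) fun s => (hpos s).ne'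
  rw [intervalIntegral.integral_eq_sub_of_hasDerivAt hderiv hcont]
  ring

lemma integral_exp_one_sub_cos (b t : ℝ) (hb : 0 < b) (ht : 0 < t) :
    ∫ x in Set.Ioi (0:ℝ), Real.exp (-(b*x)) * ((1 - Real.cos (t*x))/x)
      = (Real.log (t^2+b^2) - Real.log (b^2)) / 2 := by
  have hint : Integrable (uncurry fun x s => Real.exp (-(b*x)) * Real.sin (s*x))
      ((volume.restrict (Set.Ioi (0:ℝ))).prod (volume.restrict (Set.Ioc (0:ℝ) t))) := by
    have h1 : Integrable (fun x : ℝ => Real.exp (-(b*x))) (volume.restrict (Set.Ioi (0:ℝ))) := by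
      have := exp_neg_integrableOn_Ioi 0 hb
      simp only [neg_mul] at this
      exact this
    have h2 : Integrable (fun _ : ℝ => (1:ℝ)) (volume.restrict (Set.Ioc (0:ℝ) t)) := by
      rw [integrable_const_iff]
      right
      exact isFiniteMeasure_restrict.mpr measure_Ioc_lt_top.ne
    have h := h1.mul_prod h2
    apply Integrable.mono' h
    · apply Measurable.aestronglyMeasurable; fun_prop
    · filter_upwards with p
      rw [uncurry]
      rw [norm_mul, Real.norm_eq_abs, Real.norm_eq_abs, Real.abs_exp]
      simp only [mul_one]
      calc Real.exp (-(b*p.1)) * |Real.sin (p.2*p.1)| ≤ Real.exp (-(b*p.1)) * 1 :=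
        mul_le_mul_of_nonneg_left (Real.abs_sin_le_one _) (Real.exp_pos _).le
      _ = Real.exp (-(b*p.1)) := mul_one _
  have hswap := MeasureTheory.integral_integral_swap hint
  -- inner over s
  have hinner : ∀ x ∈ Set.Ioi (0:ℝ),
      ∫ s in Set.Ioc (0:ℝ) t, Real.exp (-(b*x)) * Real.sin (s*x)
        = Real.exp (-(b*x)) * ((1 - Real.cos (t*x))/x) := by
    intro x hx
    rw [integral_const_mul]
    congr 1
    rw [← intervalIntegral.integral_of_le ht.le]
    rw [intervalIntegral.integral_comp_mul_right Real.sin (ne_of_gt hx)]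
    rw [integral_sin]
    simp only [smul_eq_mul, zero_mul, Real.cos_zero]
    field_simp
  have houter : ∀ s ∈ Set.Ioc (0:ℝ) t,
      ∫ x in Set.Ioi (0:ℝ), Real.exp (-(b*x)) * Real.sin (s*x) = s / (s^2+b^2) :=
    fun s _ => integral_exp_sin b s hb
  calc ∫ x in Set.Ioi (0:ℝ), Real.exp (-(b*x)) * ((1 - Real.cos (t*x))/x)
      = ∫ x in Set.Ioi (0:ℝ), ∫ s in Set.Ioc (0:ℝ) t, Real.exp (-(b*x)) * Real.sin (s*x) := by
        exact (MeasureTheory.setIntegral_congr_fun measurableSet_Ioi fun x hx => (hinner x hx).symm)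
    _ = ∫ s in Set.Ioc (0:ℝ) t, ∫ x in Set.Ioi (0:ℝ), Real.exp (-(b*x)) * Real.sin (s*x) := hswap
    _ = ∫ s in Set.Ioc (0:ℝ) t, s / (s^2+b^2) :=
        MeasureTheory.setIntegral_congr_fun measurableSet_Ioc houter
    _ = ∫ s in (0:ℝ)..t, s / (s^2+b^2) := (intervalIntegral.integral_of_le ht.le).symm
    _ = (Real.log (t^2+b^2) - Real.log (b^2)) / 2 := integral_s_div b t hb

lemma series_pointwise (t x : ℝ) (hx : 0 < x) :
    HasSum (fun n : ℕ => -(2 * (Real.exp (-((2*n+1)*π/2 * x)) * ((1 - Real.cos (t*x))/x))))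
      ((Real.cos (t*x) - 1) / (x * Real.sinh (π*x/2))) := by
  set y : ℝ := π*x/2 with hy
  have hy0 : 0 < y := by positivity
  have hr1 : Real.exp (-(2*y)) < 1 := by
    rw [Real.exp_lt_one_iff]; linarith
  have hr0 : 0 ≤ Real.exp (-(2*y)) := (Real.exp_pos _).le
  have hgeo : HasSum (fun n : ℕ => Real.exp (-y) * Real.exp (-(2*y)) ^ n)
      (Real.exp (-y) * (1 - Real.exp (-(2*y)))⁻¹) :=
    (hasSum_geometric_of_lt_one hr0 hr1).mul_left _
  have hterm : ∀ n : ℕ, Real.exp (-y) * Real.exp (-(2*y)) ^ n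
      = Real.exp (-((2*n+1)*π/2 * x)) := by
    intro n
    rw [← Real.exp_nat_mul, ← Real.exp_add]
    congr 1
    rw [hy]
    push_cast
    ring
  rw [funext hterm] at hgeo
  have h2 := (hgeo.mul_left (2 * ((1 - Real.cos (t*x))/x))).neg
  have hval : -(2 * ((1 - Real.cos (t*x))/x) * (Real.exp (-y) * (1 - Real.exp (-(2*y)))⁻¹))
      = (Real.cos (t*x) - 1) / (x * Real.sinh (π*x/2)) := by
    rw [Real.sinh_eq, ← hy]
    have h1 : (1:ℝ) - Real.exp (-(2*y)) ≠ 0 := by linarith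
    have h2' : Real.exp y - Real.exp (-y) ≠ 0 := by
      have := Real.sinh_pos_iff.mpr hy0
      rw [Real.sinh_eq] at this
      intro h
      rw [h] at this
      norm_num at this
    have hme : Real.exp (-(2*y)) = Real.exp (-y) * Real.exp (-y) := by
      rw [← Real.exp_add]; ring_nf
    field_simp
    rw [hme]
    have he : Real.exp (-y) = (Real.exp y)⁻¹ := Real.exp_neg y
    rw [he]
    have hey : Real.exp y ≠ 0 := (Real.exp_pos y).ne'
    field_simp
    ring
  rw [← hval]
  convert h2 using 2 with n
  · rfl
  · ring

lemma main_pos (t : ℝ) (ht : 0 < t) :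
    IntegrableOn (fun x : ℝ => (Real.cos (t * x) - 1) / (x * Real.sinh (π * x / 2)))
      (Set.Ioi 0) ∧
    (∫ x in Set.Ioi (0 : ℝ), (Real.cos (t * x) - 1) / (x * Real.sinh (π * x / 2)))
      = -Real.log (Real.cosh t) := by
  set b : ℕ → ℝ := fun n => (2*n+1)*π/2 with hb
  have hbpos : ∀ n : ℕ, 0 < b n := by
    intro n; rw [hb]; positivity
  set c : ℕ → ℝ := fun n => 4 * t ^ 2 / (π ^ 2 * (2 * n + 1) ^ 2) with hc
  have hcpos : ∀ n : ℕ, 0 < c n := by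
    intro n; rw [hc]; positivity
  set F : ℕ → ℝ → ℝ := fun n x => -(2 * (Real.exp (-(b n * x)) * ((1 - Real.cos (t*x))/x)))
    with hF
  set f : ℝ → ℝ := fun x => (Real.cos (t * x) - 1) / (x * Real.sinh (π * x / 2)) with hf
  have hcrel : ∀ n : ℕ, Real.log (t^2 + (b n)^2) - Real.log ((b n)^2) = Real.log (1 + c n) := by
    intro n
    rw [← Real.log_div (by positivity) (by positivity)]
    congr 1
    rw [hb, hc]
    have : π ≠ 0 := Real.pi_ne_zero
    field_simp
    ring
  have hFint : ∀ n : ℕ, IntegrableOn (F n) (Set.Ioi 0) :=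
    fun n => (((integrable_exp_one_sub_cos (b n) t (hbpos n)).const_mul 2).neg)
  have hFval : ∀ n : ℕ, ∫ x in Set.Ioi (0:ℝ), F n x = -Real.log (1 + c n) := by
    intro n
    rw [hF]
    simp only
    rw [integral_neg, integral_const_mul, integral_exp_one_sub_cos (b n) t (hbpos n) ht,
      ← hcrel n]
    ring
  have hlog_le : ∀ n : ℕ, Real.log (1 + c n) ≤ c n := by
    intro n
    have := Real.log_le_sub_one_of_pos (show (0:ℝ) < 1 + c n by linarith [hcpos n])
    linarith
  have hlog_nonneg : ∀ n : ℕ, 0 ≤ Real.log (1 + c n) := fun n =>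
    Real.log_nonneg (by linarith [hcpos n])
  have hcsummable : Summable c := by
    have h0 : Summable (fun n : ℕ => 1 / ((n:ℝ)+1)^2) := by
      have := (summable_nat_add_iff (f := fun n : ℕ => 1 / (n:ℝ)^2) 1).mpr
        ((Real.summable_one_div_nat_pow (p := 2)).mpr one_lt_two)
      simpa using this
    apply Summable.of_nonneg_of_le (fun n => (hcpos n).le) _ (h0.mul_left (4*t^2/π^2))
    intro n
    rw [hc]
    simp only
    rw [div_le_iff₀ (by positivity)]
    have h1 : ((n:ℝ)+1)^2 ≤ (2*(n:ℝ)+1)^2 := by nlinarith [Nat.cast_nonneg (α := ℝ) n]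
    calc (4:ℝ) * t^2 = (4*t^2/π^2) * (1/((n:ℝ)+1)^2) * (π^2*((n:ℝ)+1)^2) := by
          have : π ≠ 0 := Real.pi_ne_zero
          field_simp
      _ ≤ (4*t^2/π^2) * (1/((n:ℝ)+1)^2) * (π^2*(2*(n:ℝ)+1)^2) := by
          gcongr
  have hlogsummable : Summable (fun n : ℕ => Real.log (1 + c n)) :=
    Summable.of_nonneg_of_le hlog_nonneg hlog_le hcsummable
  have hlogsum : ∑' n : ℕ, Real.log (1 + c n) = Real.log (Real.cosh t) := by
    have h1 := hlogsummable.hasSum.tendsto_sum_nat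
    have h2 : ∀ N : ℕ, ∑ n ∈ Finset.range N, Real.log (1 + c n)
        = Real.log (∏ n ∈ Finset.range N, (1 + c n)) :=
      fun N => (Real.log_prod fun n _ => ne_of_gt (by linarith [hcpos n])).symm
    rw [funext h2] at h1
    have h3 : Filter.Tendsto (fun N : ℕ => Real.log (∏ n ∈ Finset.range N, (1 + c n)))
        atTop (𝓝 (Real.log (Real.cosh t))) := by
      have hcont := (Real.continuousAt_log (Real.cosh_pos (x := t)).ne').tendsto
      exact hcont.comp (cosh_prod t ht.ne')
    exact tendsto_nhds_unique h1 h3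
  have hmeas : ∀ n : ℕ, AEStronglyMeasurable (F n) (volume.restrict (Set.Ioi 0)) := by
    intro n
    apply Measurable.aestronglyMeasurable
    rw [hF]
    fun_prop
  have hnorm_int : ∀ n : ℕ, ∫ x in Set.Ioi (0:ℝ), ‖F n x‖ = Real.log (1 + c n) := by
    intro n
    have heq : Set.EqOn (fun x => ‖F n x‖)
        (fun x => 2 * (Real.exp (-(b n * x)) * ((1 - Real.cos (t*x))/x))) (Set.Ioi 0) := by
      intro x hx
      rw [hF]
      simp only [norm_neg, Real.norm_eq_abs]
      rw [abs_of_nonneg]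
      exact mul_nonneg (by norm_num)
        (mul_nonneg (Real.exp_pos _).le (one_sub_cos_div_nonneg t x hx))
    rw [MeasureTheory.setIntegral_congr_fun measurableSet_Ioi heq, integral_const_mul,
      integral_exp_one_sub_cos (b n) t (hbpos n) ht, hcrel n]
    ring
  have hlint : ∀ n : ℕ, ∫⁻ x in Set.Ioi (0:ℝ), ‖F n x‖₊ = ENNReal.ofReal (Real.log (1 + c n)) := by
    intro n
    simp_rw [← enorm_eq_nnnorm]
    rw [← MeasureTheory.ofReal_integral_norm_eq_lintegral_enorm (hFint n), hnorm_int n]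
  have hlint_sum : ∑' n : ℕ, ∫⁻ x in Set.Ioi (0:ℝ), ‖F n x‖₊ ≠ ⊤ := by
    rw [funext hlint]
    have hle : ∑' n : ℕ, ENNReal.ofReal (Real.log (1 + c n))
        ≤ ∑' n : ℕ, ENNReal.ofReal (c n) :=
      ENNReal.tsum_le_tsum fun n => ENNReal.ofReal_le_ofReal (hlog_le n)
    have heq2 : ∑' n : ℕ, ENNReal.ofReal (c n) = ENNReal.ofReal (∑' n, c n) :=
      (ENNReal.ofReal_tsum_of_nonneg (fun n => (hcpos n).le) hcsummable).symm
    exact ne_top_of_le_ne_top (by rw [heq2]; exact ENNReal.ofReal_ne_top) hle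
  have hseries : ∀ x ∈ Set.Ioi (0:ℝ), HasSum (fun n : ℕ => F n x) (f x) := by
    intro x hx
    exact series_pointwise t x hx
  have hptws : Set.EqOn f (fun x => ∑' n : ℕ, F n x) (Set.Ioi 0) :=
    fun x hx => ((hseries x hx).tsum_eq).symm
  -- integrability
  have hfmeas : AEStronglyMeasurable f (volume.restrict (Set.Ioi 0)) := by
    apply Measurable.aestronglyMeasurable
    rw [hf]
    fun_prop
  have hnorm_ptws : ∀ x ∈ Set.Ioi (0:ℝ), (‖f x‖₊ : ENNReal) = ∑' n : ℕ, (‖F n x‖₊ : ENNReal) := by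
    intro x hx
    have h := hseries x hx
    have hFnonpos : ∀ n : ℕ, F n x ≤ 0 := by
      intro n
      rw [hF]
      simp only [neg_nonpos]
      exact mul_nonneg (by norm_num)
        (mul_nonneg (Real.exp_pos _).le (one_sub_cos_div_nonneg t x hx))
    have hnormsum : HasSum (fun n : ℕ => ‖F n x‖) ‖f x‖ := by
      have hfx : f x ≤ 0 := by
        have := h.nonpos (fun n => hFnonpos n)
        exact this
      have h' := h.neg
      have e1 : (fun n : ℕ => -(F n x)) = fun n : ℕ => ‖F n x‖ := by
        funext n
        rw [Real.norm_eq_abs, abs_of_nonpos (hFnonpos n)]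
      have e2 : -(f x) = ‖f x‖ := by rw [Real.norm_eq_abs, abs_of_nonpos hfx]
      rwa [e1, e2] at h'
    rw [← enorm_eq_nnnorm, ← ofReal_norm, ← hnormsum.tsum_eq,
      ENNReal.ofReal_tsum_of_nonneg (fun n => norm_nonneg _) hnormsum.summable]
    simp_rw [ofReal_norm, enorm_eq_nnnorm]
  have hfint : IntegrableOn f (Set.Ioi 0) := by
    refine ⟨hfmeas, ?_⟩
    rw [hasFiniteIntegral_def]
    calc ∫⁻ x in Set.Ioi (0:ℝ), ‖f x‖₊
        = ∫⁻ x in Set.Ioi (0:ℝ), ∑' n : ℕ, (‖F n x‖₊ : ENNReal) := by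
          apply lintegral_congr_ae
          exact (ae_restrict_iff' measurableSet_Ioi).mpr (ae_of_all _ hnorm_ptws)
      _ = ∑' n : ℕ, ∫⁻ x in Set.Ioi (0:ℝ), ‖F n x‖₊ :=
          lintegral_tsum fun n => (hmeas n).enorm
      _ < ⊤ := lt_top_iff_ne_top.mpr hlint_sum
  refine ⟨hfint, ?_⟩
  calc ∫ x in Set.Ioi (0:ℝ), f x
      = ∫ x in Set.Ioi (0:ℝ), ∑' n : ℕ, F n x :=
        MeasureTheory.setIntegral_congr_fun measurableSet_Ioi hptws
    _ = ∑' n : ℕ, ∫ x in Set.Ioi (0:ℝ), F n x :=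
        MeasureTheory.integral_tsum hmeas hlint_sum
    _ = ∑' n : ℕ, -Real.log (1 + c n) := by rw [funext hFval]
    _ = -∑' n : ℕ, Real.log (1 + c n) := tsum_neg
    _ = -Real.log (Real.cosh t) := by rw [hlogsum]


/-- for every real `t`, the integral
`∫_0^∞ (cos(tx) − 1)/(x·sinh(πx/2)) dx` converges and equals `−log(cosh(t))`. -/
theorem hyperbolic_cosine_levy_exponent (t : ℝ) :
    IntegrableOn (fun x : ℝ => (Real.cos (t * x) - 1) / (x * Real.sinh (π * x / 2)))
      (Set.Ioi 0) ∧
    (∫ x in Set.Ioi (0 : ℝ), (Real.cos (t * x) - 1) / (x * Real.sinh (π * x / 2)))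
      = -Real.log (Real.cosh t) := by
  rcases lt_trichotomy t 0 with htneg | rfl | htpos
  · have h := main_pos (-t) (by linarith)
    simp only [neg_mul, Real.cos_neg, Real.cosh_neg] at h
    exact h
  · have hzero : (fun x : ℝ => (Real.cos (0 * x) - 1) / (x * Real.sinh (π * x / 2)))
        = fun _ : ℝ => (0:ℝ) := by
      funext x
      simp
    rw [hzero]
    constructor
    · exact integrableOn_zero
    · simp
  · exact main_pos t htpos
end

section
/- For every real α > 0 and every real t, the integral ∫_0^∞ (cos(tx) − 1)·e^{−απx}/(x·(1 − e^{−πx})) dx converges and equals log |Γ(α + it/π)| − log Γ(α), where Γ is the complex Gamma function and |z| the complex absolute value. -/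
open Real MeasureTheory
open Filter Topology Set

lemma term_integrable {c : ℝ} (hc : 0 < c) (t : ℝ) :
    IntegrableOn (fun x : ℝ => (Real.cos (t*x) - 1) * (Real.exp (-(c*x)) / x)) (Set.Ioi 0) := by
  have hbound : IntegrableOn (fun x : ℝ => t^2/c * Real.exp (-(c/2) * x)) (Set.Ioi 0) :=
    (exp_neg_integrableOn_Ioi 0 (by positivity)).const_mul _
  refine Integrable.mono' hbound ?_ ?_
  · apply (ContinuousOn.mul ?_ ?_).aestronglyMeasurable measurableSet_Ioi
    · fun_prop
    · exact ContinuousOn.div (by fun_prop) continuousOn_id (fun x hx => ne_of_gt hx)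
  · filter_upwards [ae_restrict_mem measurableSet_Ioi] with x hx
    have hx0 : 0 < x := hx
    have h1 : |Real.cos (t*x) - 1| ≤ (t*x)^2/2 := by
      have h2 := Real.one_sub_sq_div_two_le_cos (x := t*x)
      have h3 := Real.cos_le_one (t*x)
      rw [abs_le]; constructor <;> nlinarith
    have hxe : x ≤ 2/c * Real.exp (c/2 * x) := by
      have h4 := Real.add_one_le_exp (c/2 * x)
      rw [div_mul_eq_mul_div, le_div_iff₀ hc]
      nlinarith
    have hnn : 0 ≤ Real.exp (-(c*x)) / x := by positivity
    calc ‖(Real.cos (t*x) - 1) * (Real.exp (-(c*x)) / x)‖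
        = |Real.cos (t*x) - 1| * (Real.exp (-(c*x)) / x) := by
          rw [norm_mul, Real.norm_eq_abs, Real.norm_eq_abs, abs_of_nonneg hnn]
      _ ≤ ((t*x)^2/2) * (Real.exp (-(c*x)) / x) := mul_le_mul_of_nonneg_right h1 hnn
      _ = (t^2/2) * (x * Real.exp (-(c*x))) := by field_simp
      _ ≤ (t^2/2) * ((2/c * Real.exp (c/2 * x)) * Real.exp (-(c*x))) := by
          have h5 : (0:ℝ) ≤ t^2/2 := by positivity
          exact mul_le_mul_of_nonneg_left
            (mul_le_mul_of_nonneg_right hxe (Real.exp_pos _).le) h5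
      _ = t^2/c * Real.exp (-(c/2) * x) := by
          rw [mul_assoc, ← Real.exp_add, show c/2*x + -(c*x) = -(c/2)*x by ring]
          ring

lemma intSin {c : ℝ} (hc : 0 < c) (u : ℝ) :
    ∫ x in Set.Ioi (0:ℝ), Real.sin (u*x) * Real.exp (-(c*x)) = u/(c^2+u^2) := by
  have hK : (0:ℝ) < c^2 + u^2 := by positivity
  set F : ℝ → ℝ :=
    fun x => -(Real.exp (-(c*x)) * (c * Real.sin (u*x) + u * Real.cos (u*x))) / (c^2+u^2)
    with hF
  have hderiv : ∀ x ∈ Set.Ici (0:ℝ), HasDerivAt F (Real.sin (u*x) * Real.exp (-(c*x))) x := by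
    intro x _
    have hlin : HasDerivAt (fun x : ℝ => -(c*x)) (-c) x := by
      exact ((hasDerivAt_id x).const_mul c).neg.congr_deriv (by ring)
    have hmul : HasDerivAt (fun x : ℝ => u*x) u x := by
      simpa using (hasDerivAt_id x).const_mul u
    have hsin := hmul.sin
    have hcos := hmul.cos
    have h2 := (((hlin.exp.mul ((hsin.const_mul c).add (hcos.const_mul u))).neg).div_const
      (c^2+u^2))
    refine h2.congr_deriv ?_
    simp only [Pi.add_apply]
    field_simp
    ring
  have htend : Filter.Tendsto F Filter.atTop (nhds 0) := by
    apply squeeze_zero_norm (a := fun x => (c + |u|)/(c^2+u^2) * Real.exp (-(c*x)))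
    · intro x
      have h1 : |c * Real.sin (u*x) + u * Real.cos (u*x)| ≤ c + |u| := by
        calc |c * Real.sin (u*x) + u * Real.cos (u*x)|
            ≤ |c * Real.sin (u*x)| + |u * Real.cos (u*x)| := abs_add_le _ _
          _ ≤ c + |u| := by
              rw [abs_mul, abs_mul, abs_of_pos hc]
              nlinarith [Real.abs_sin_le_one (u*x), Real.abs_cos_le_one (u*x),
                abs_nonneg u, hc.le]
      have h2 : ‖F x‖ = Real.exp (-(c*x)) * |c * Real.sin (u*x) + u * Real.cos (u*x)| / (c^2+u^2) := by
        rw [hF, Real.norm_eq_abs, abs_div, abs_neg, abs_mul, abs_of_pos (Real.exp_pos _),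
          abs_of_pos hK]
      rw [h2]
      calc Real.exp (-(c*x)) * |c * Real.sin (u*x) + u * Real.cos (u*x)| / (c^2+u^2)
          ≤ Real.exp (-(c*x)) * (c + |u|) / (c^2+u^2) := by gcongr
        _ = (c + |u|)/(c^2+u^2) * Real.exp (-(c*x)) := by ring
    · have h0 : Filter.Tendsto (fun x : ℝ => Real.exp (-(c*x))) Filter.atTop (nhds 0) := by
        simpa [Function.comp_def] using
          Real.tendsto_exp_neg_atTop_nhds_zero.comp (Filter.tendsto_id.const_mul_atTop hc)
      simpa using h0.const_mul ((c + |u|)/(c^2+u^2))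
  have hint : IntegrableOn (fun x => Real.sin (u*x) * Real.exp (-(c*x))) (Set.Ioi 0) := by
    refine Integrable.mono' (by simpa [neg_mul] using (exp_neg_integrableOn_Ioi 0 hc).integrable) ?_ ?_
    · exact (Continuous.aestronglyMeasurable (by fun_prop))
    · filter_upwards with x
      rw [norm_mul, Real.norm_eq_abs, Real.norm_eq_abs, abs_of_pos (Real.exp_pos _)]
      nlinarith [Real.abs_sin_le_one (u*x), Real.exp_pos (-(c*x))]
  rw [MeasureTheory.integral_Ioi_of_hasDerivAt_of_tendsto' hderiv hint htend]
  have hF0 : F 0 = -(u/(c^2+u^2)) := by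
    simp [hF, neg_div]
  rw [hF0]
  ring

lemma Gval {c : ℝ} (hc : 0 < c) (t : ℝ) :
    ∫ x in Set.Ioi (0:ℝ), (Real.cos (t*x) - 1) * (Real.exp (-(c*x)) / x)
      = -(1/2) * (Real.log (c^2+t^2) - Real.log (c^2)) := by
  set G : ℝ → ℝ := fun u => ∫ x in Set.Ioi (0:ℝ), (Real.cos (u*x) - 1) * (Real.exp (-(c*x)) / x)
    with hG
  have hgd : ∀ u₀ : ℝ, HasDerivAt G (-(u₀/(c^2+u₀^2))) u₀ := by
    intro u₀
    have main := hasDerivAt_integral_of_dominated_loc_of_deriv_le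
      (μ := MeasureTheory.volume.restrict (Set.Ioi 0)) (x₀ := u₀)
      (F := fun u x => (Real.cos (u*x) - 1) * (Real.exp (-(c*x)) / x))
      (F' := fun u x => -(Real.sin (u*x) * Real.exp (-(c*x))))
      (bound := fun x => Real.exp (-(c*x))) Filter.univ_mem
      (Filter.Eventually.of_forall (fun u => (term_integrable hc u).aestronglyMeasurable))
      (term_integrable hc u₀)
      (Continuous.aestronglyMeasurable (by fun_prop))
      ?_ (by simpa [neg_mul] using (exp_neg_integrableOn_Ioi 0 hc).integrable) ?_
    · have h2 := main.2
      have h3 : (∫ x in Set.Ioi (0:ℝ), -(Real.sin (u₀*x) * Real.exp (-(c*x))))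
          = -(u₀/(c^2+u₀^2)) := by
        rw [MeasureTheory.integral_neg, intSin hc u₀]
      rwa [h3] at h2
    · filter_upwards with x
      intro u _
      rw [norm_neg, norm_mul, Real.norm_eq_abs, Real.norm_eq_abs, abs_of_pos (Real.exp_pos _)]
      nlinarith [Real.abs_sin_le_one (u*x), Real.exp_pos (-(c*x))]
    · filter_upwards [MeasureTheory.ae_restrict_mem measurableSet_Ioi] with x hx
      intro u _
      have hx0 : (0:ℝ) < x := hx
      have hmul : HasDerivAt (fun u : ℝ => u*x) x u := hasDerivAt_mul_const x
      have h3 := ((hmul.cos).sub_const 1).mul_const (Real.exp (-(c*x)) / x)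
      refine h3.congr_deriv ?_
      field_simp
  have hcont : Continuous (fun u : ℝ => -(u/(c^2+u^2))) := by
    apply Continuous.neg
    exact Continuous.div continuous_id (by continuity) (fun u => by positivity)
  have h1 : ∫ u in (0:ℝ)..t, -(u/(c^2+u^2)) = G t - G 0 :=
    intervalIntegral.integral_eq_sub_of_hasDerivAt (fun u _ => hgd u)
      (hcont.intervalIntegrable _ _)
  have hH : ∀ u : ℝ, HasDerivAt (fun u : ℝ => -(1/2) * Real.log (c^2+u^2))
      (-(u/(c^2+u^2))) u := by
    intro u
    have hpos : (0:ℝ) < c^2+u^2 := by positivity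
    have h2 : HasDerivAt (fun u : ℝ => c^2+u^2) (2*u^1) u := by
      simpa using (hasDerivAt_pow 2 u).const_add (c^2)
    have h3 := (h2.log (ne_of_gt hpos)).const_mul (-(1/2) : ℝ)
    refine h3.congr_deriv ?_
    field_simp
  have h2 : ∫ u in (0:ℝ)..t, -(u/(c^2+u^2))
      = (-(1/2) * Real.log (c^2+t^2)) - (-(1/2) * Real.log (c^2+0^2)) :=
    intervalIntegral.integral_eq_sub_of_hasDerivAt (fun u _ => hH u)
      (hcont.intervalIntegrable _ _)
  have hG0 : G 0 = 0 := by
    rw [hG]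
    simp
  have h4 := h1.symm.trans h2
  rw [hG0, sub_zero] at h4
  have h5 : G t = -(1/2) * (Real.log (c^2+t^2) - Real.log (c^2)) := by
    rw [h4, show c^2+0^2 = c^2 by ring]
    ring
  exact h5

lemma term_norm_integral {c : ℝ} (hc : 0 < c) (t : ℝ) :
    ∫ x in Set.Ioi (0:ℝ), ‖(Real.cos (t*x) - 1) * (Real.exp (-(c*x)) / x)‖
      = (1/2) * (Real.log (c^2+t^2) - Real.log (c^2)) := by
  have h1 : Set.EqOn (fun x : ℝ => ‖(Real.cos (t*x) - 1) * (Real.exp (-(c*x)) / x)‖)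
      (fun x : ℝ => -((Real.cos (t*x) - 1) * (Real.exp (-(c*x)) / x))) (Set.Ioi 0) := by
    intro x hx
    have hx0 : (0:ℝ) < x := hx
    simp only [Real.norm_eq_abs]
    rw [abs_of_nonpos]
    exact mul_nonpos_of_nonpos_of_nonneg (by nlinarith [Real.cos_le_one (t*x)])
      (div_nonneg (Real.exp_pos _).le hx0.le)
  rw [MeasureTheory.setIntegral_congr_fun measurableSet_Ioi h1, MeasureTheory.integral_neg,
    Gval hc t]
  ring

lemma summable_inv_sq_shift {α : ℝ} (hα : 0 < α) :
    Summable (fun n : ℕ => 1/((α+n):ℝ)^2) := by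
  have h0 : Summable (fun n : ℕ => 1/((n:ℝ))^2) :=
    summable_one_div_nat_pow.mpr one_lt_two
  have h1 : Summable (fun n : ℕ => 1/((n:ℝ)+1)^2) := by
    refine ((summable_nat_add_iff 1).mpr h0).congr (fun n => ?_)
    push_cast
    ring
  set c := min α 1 with hcdef
  have hc0 : 0 < c := lt_min hα one_pos
  refine Summable.of_nonneg_of_le (fun n => by positivity) (fun n => ?_) (h1.mul_left (1/c^2))
  have h2 : c ≤ α := min_le_left _ _
  have h3 : c ≤ 1 := min_le_right _ _
  have hcn : c * ((n:ℝ)+1) ≤ α + n := by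
    have h4 : c*(n:ℝ) ≤ n := by nlinarith [Nat.cast_nonneg (α := ℝ) n]
    nlinarith
  have h5 : (0:ℝ) < c * ((n:ℝ)+1) := by positivity
  calc 1/(α+(n:ℝ))^2 ≤ 1/(c*((n:ℝ)+1))^2 := by
        apply one_div_le_one_div_of_le (by positivity)
        exact pow_le_pow_left₀ h5.le hcn 2
    _ = 1/c^2 * (1/((n:ℝ)+1)^2) := by
        rw [mul_pow, one_div, mul_inv, one_div, one_div]

lemma gamma_hasSum {α : ℝ} (hα : 0 < α) (β : ℝ) :
    HasSum (fun n : ℕ => -(1/2) * (Real.log ((α+n)^2+β^2) - Real.log ((α+n)^2)))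
      (Real.log (‖Complex.Gamma ((α:ℂ) + (β:ℂ)*Complex.I)‖)
        - Real.log (Real.Gamma α)) := by
  set z : ℂ := (α:ℂ) + (β:ℂ)*Complex.I with hz
  have hpos : ∀ n : ℕ, (0:ℝ) < α + n := fun n => by positivity
  have hre : ∀ n : ℕ, (z + n).re = α + n := by
    intro n; simp [hz]
  have him : ∀ n : ℕ, (z + n).im = β := by
    intro n; simp [hz]
  have hzn : ∀ n : ℕ, z + (n:ℂ) ≠ 0 := by
    intro n h
    have h2 := congrArg Complex.re h
    rw [hre n] at h2
    simp at h2
    nlinarith [hpos n]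
  have habs : ∀ n : ℕ, ‖z + n‖ = Real.sqrt ((α+n)^2+β^2) := by
    intro n
    rw [Complex.norm_def, Complex.normSq_apply, hre, him]
    congr 1
    ring
  have hlogabs : ∀ n : ℕ, Real.log (‖z+n‖) = Real.log ((α+n)^2+β^2) / 2 := by
    intro n
    rw [habs n, Real.log_sqrt (by positivity)]
  have hterm : ∀ n : ℕ, -(1/2) * (Real.log ((α+n)^2+β^2) - Real.log ((α+n)^2))
      = Real.log (α+n) - Real.log (‖z+n‖) := by
    intro n
    rw [hlogabs n, Real.log_pow]
    push_cast
    ring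
  have hd_nonneg : ∀ n : ℕ, 0 ≤ Real.log ((α+n)^2+β^2) - Real.log ((α+n)^2) := by
    intro n
    have := Real.log_le_log (show (0:ℝ) < (α+n)^2 by positivity)
      (show ((α+n):ℝ)^2 ≤ (α+n)^2+β^2 by nlinarith [sq_nonneg β])
    linarith
  have hd_le : ∀ n : ℕ, Real.log ((α+n)^2+β^2) - Real.log ((α+n)^2)
      ≤ β^2 * (1/(α+n)^2) := by
    intro n
    have h1 : Real.log ((α+n)^2+β^2) - Real.log ((α+n)^2)
        = Real.log (((α+n)^2+β^2)/((α+n)^2)) :=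
      (Real.log_div (by positivity) (by positivity)).symm
    rw [h1]
    have h2 := Real.log_le_sub_one_of_pos
      (show (0:ℝ) < ((α+n)^2+β^2)/((α+n)^2) by positivity)
    have h3 : ((α+n)^2+β^2)/((α+n)^2) - 1 = β^2 * (1/(α+n)^2) := by
      field_simp
      ring
    linarith
  have hd_sum : Summable (fun n : ℕ => Real.log ((α+n)^2+β^2) - Real.log ((α+n)^2)) :=
    Summable.of_nonneg_of_le hd_nonneg hd_le ((summable_inv_sq_shift hα).mul_left (β^2))
  have hc_sum : Summable (fun n : ℕ => -(1/2) * (Real.log ((α+n)^2+β^2) - Real.log ((α+n)^2))) :=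
    hd_sum.mul_left (-(1/2))
  have key : ∀ n : ℕ, 1 ≤ n →
      (∑ j ∈ Finset.range (n+1), -(1/2) * (Real.log ((α+j)^2+β^2) - Real.log ((α+j)^2)))
        = Real.log (‖Complex.GammaSeq z n‖) - Real.log (Real.GammaSeq α n) := by
    intro n hn
    have hn0 : (0:ℝ) < (n:ℝ) := by exact_mod_cast hn
    have hfac : (0:ℝ) < (n.factorial : ℝ) := by exact_mod_cast Nat.factorial_pos n
    have hnum : (0:ℝ) < (n:ℝ) ^ α * (n.factorial : ℝ) := mul_pos (Real.rpow_pos_of_pos hn0 α) hfac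
    have habsGS : ‖Complex.GammaSeq z n‖
        = ((n:ℝ) ^ α * (n.factorial : ℝ)) / ∏ j ∈ Finset.range (n+1), ‖z + j‖ := by
      rw [Complex.GammaSeq, norm_div, norm_mul, norm_prod]
      congr 2
      · rw [show ((n:ℂ)) = (((n:ℝ)):ℂ) by push_cast; rfl,
          Complex.norm_cpow_eq_rpow_re_of_pos hn0]
        congr 1
        simp [hz]
      · simp
    have hB : (0:ℝ) < ∏ j ∈ Finset.range (n+1), ‖z + j‖ :=
      Finset.prod_pos (fun j _ => norm_pos_iff.mpr (hzn j))
    have hA : (0:ℝ) < ∏ j ∈ Finset.range (n+1), (α+(j:ℝ)) :=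
      Finset.prod_pos (fun j _ => hpos j)
    have hGSα : Real.GammaSeq α n = ((n:ℝ) ^ α * (n.factorial : ℝ)) / ∏ j ∈ Finset.range (n+1), (α+(j:ℝ)) := rfl
    rw [habsGS, hGSα, Real.log_div (ne_of_gt hnum) (ne_of_gt hB),
      Real.log_div (ne_of_gt hnum) (ne_of_gt hA),
      Real.log_prod (fun j _ => ne_of_gt (norm_pos_iff.mpr (hzn j))),
      Real.log_prod (fun j _ => ne_of_gt (hpos j)),
      Finset.sum_congr rfl (fun j _ => hterm j), Finset.sum_sub_distrib]
    ring
  have hzΓ : Complex.Gamma z ≠ 0 := by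
    apply Complex.Gamma_ne_zero_of_re_pos
    rw [hz]
    simpa using hα
  have hαΓ : (0:ℝ) < Real.Gamma α := Real.Gamma_pos_of_pos hα
  have h1 : Filter.Tendsto (fun n => Real.log (‖Complex.GammaSeq z n‖))
      Filter.atTop (nhds (Real.log (‖Complex.Gamma z‖))) :=
    Filter.Tendsto.log ((continuous_norm.tendsto _).comp (Complex.GammaSeq_tendsto_Gamma z))
      (by simpa using hzΓ)
  have h2 : Filter.Tendsto (fun n => Real.log (Real.GammaSeq α n))
      Filter.atTop (nhds (Real.log (Real.Gamma α))) :=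
    Filter.Tendsto.log (Real.GammaSeq_tendsto_Gamma α) (ne_of_gt hαΓ)
  have h3 := h1.sub h2
  have h4 : Filter.Tendsto
      (fun n : ℕ => ∑ j ∈ Finset.range (n+1),
        -(1/2) * (Real.log ((α+j)^2+β^2) - Real.log ((α+j)^2)))
      Filter.atTop
      (nhds (Real.log (‖Complex.Gamma z‖) - Real.log (Real.Gamma α))) := by
    apply h3.congr'
    filter_upwards [Filter.eventually_ge_atTop 1] with n hn
    exact (key n hn).symm
  have h5 : Filter.Tendsto
      (fun n : ℕ => ∑ j ∈ Finset.range n,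
        -(1/2) * (Real.log ((α+j)^2+β^2) - Real.log ((α+j)^2)))
      Filter.atTop
      (nhds (Real.log (‖Complex.Gamma z‖) - Real.log (Real.Gamma α))) :=
    (Filter.tendsto_add_atTop_iff_nat 1).mp h4
  exact (hasSum_iff_tendsto_nat_of_summable_norm
    (by simpa only [Real.norm_eq_abs] using hc_sum.abs)).mpr h5

/-- for every real `α > 0` and real `t`, the integral
`∫_0^∞ (cos(tx) − 1)·e^{−απx}/(x·(1 − e^{−πx})) dx` converges and equals
`log |Γ(α + it/π)| − log Γ(α)`, where `Γ` is the complex Gamma function. -/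
theorem logistic_levy_exponent (α : ℝ) (hα : 0 < α) (t : ℝ) :
    IntegrableOn
      (fun x : ℝ => (Real.cos (t * x) - 1) *
        (Real.exp (-(α * π * x)) / (x * (1 - Real.exp (-(π * x)))))) (Set.Ioi 0) ∧
    (∫ x in Set.Ioi (0 : ℝ), (Real.cos (t * x) - 1) *
        (Real.exp (-(α * π * x)) / (x * (1 - Real.exp (-(π * x))))))
      = Real.log ‖Complex.Gamma ((α : ℂ) + (t / π : ℝ) * Complex.I)‖
          - Real.log (Real.Gamma α) := by

  have hπ := Real.pi_pos
  have hd : (0:ℝ) < 1 - Real.exp (-π) := by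
    have : Real.exp (-π) < 1 := Real.exp_lt_one_iff.mpr (by linarith)
    linarith
  have hq : ∀ x : ℝ, 0 < x → x / (1 - Real.exp (-(π*x))) ≤ (1+x) / (1 - Real.exp (-π)) := by
    intro x hx
    have hdx : (0:ℝ) < 1 - Real.exp (-(π*x)) := by
      have : Real.exp (-(π*x)) < 1 := Real.exp_lt_one_iff.mpr (by nlinarith)
      linarith
    rcases le_or_gt x 1 with h1 | h1
    · have hcvx := convexOn_exp.2 (Set.mem_univ (0:ℝ)) (Set.mem_univ (-π))
        (by linarith : (0:ℝ) ≤ 1 - x) (le_of_lt hx) (by ring)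
      have harg : (1-x) • (0:ℝ) + x • (-π) = -(π*x) := by
        simp only [smul_eq_mul, mul_zero, zero_add]
        ring
      rw [harg] at hcvx
      simp only [smul_eq_mul, Real.exp_zero, mul_one] at hcvx
      have h3 : x * (1 - Real.exp (-π)) ≤ 1 - Real.exp (-(π*x)) := by nlinarith
      rw [div_le_div_iff₀ hdx hd]
      nlinarith [hdx]
    · have h2 : Real.exp (-(π*x)) ≤ Real.exp (-π) := by
        apply Real.exp_le_exp.mpr
        nlinarith
      rw [div_le_div_iff₀ hdx hd]
      nlinarith [hdx, hx.le]
  set K := t^2/2 * (1 + 2/(α*π)) / (1 - Real.exp (-π)) with hK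
  have hFb : ∀ x ∈ Set.Ioi (0:ℝ),
      ‖(Real.cos (t*x) - 1) * (Real.exp (-(α*π*x)) / (x * (1 - Real.exp (-(π*x)))))‖
        ≤ K * Real.exp (-(α*π/2) * x) := by
    intro x hx
    have hx0 : (0:ℝ) < x := hx
    have hdx : (0:ℝ) < 1 - Real.exp (-(π*x)) := by
      have : Real.exp (-(π*x)) < 1 := Real.exp_lt_one_iff.mpr (by nlinarith)
      linarith
    have hqx := hq x hx0
    have hcb : |Real.cos (t*x) - 1| ≤ t^2*x^2/2 := by
      have h2 := Real.one_sub_sq_div_two_le_cos (x := t*x)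
      have h3 := Real.cos_le_one (t*x)
      rw [abs_le]
      constructor <;> nlinarith
    have hden : (0:ℝ) < x * (1 - Real.exp (-(π*x))) := mul_pos hx0 hdx
    have hE : (0:ℝ) ≤ Real.exp (-(α*π*x)) / (x * (1 - Real.exp (-(π*x)))) :=
      div_nonneg (Real.exp_pos _).le hden.le
    have hx1 : (1:ℝ) + x ≤ (1 + 2/(α*π)) * Real.exp ((α*π/2)*x) := by
      have hap : (0:ℝ) < α*π := by positivity
      have ha := Real.add_one_le_exp ((α*π/2)*x)
      have hcx : x ≤ (2/(α*π)) * Real.exp ((α*π/2)*x) := by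
        rw [div_mul_eq_mul_div, le_div_iff₀ hap]
        nlinarith
      have hdd : (1:ℝ) ≤ Real.exp ((α*π/2)*x) := Real.one_le_exp (by positivity)
      nlinarith
    calc ‖(Real.cos (t*x) - 1) * (Real.exp (-(α*π*x)) / (x * (1 - Real.exp (-(π*x)))))‖
        = |Real.cos (t*x) - 1| * (Real.exp (-(α*π*x)) / (x * (1 - Real.exp (-(π*x))))) := by
          rw [norm_mul, Real.norm_eq_abs, Real.norm_eq_abs, abs_of_nonneg hE]
      _ ≤ (t^2*x^2/2) * (Real.exp (-(α*π*x)) / (x * (1 - Real.exp (-(π*x))))) :=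
          mul_le_mul_of_nonneg_right hcb hE
      _ = (t^2/2) * Real.exp (-(α*π*x)) * (x / (1 - Real.exp (-(π*x)))) := by
          field_simp
      _ ≤ (t^2/2) * Real.exp (-(α*π*x)) * ((1+x) / (1 - Real.exp (-π))) :=
          mul_le_mul_of_nonneg_left hqx (by positivity)
      _ ≤ (t^2/2) * Real.exp (-(α*π*x)) *
            (((1 + 2/(α*π)) * Real.exp ((α*π/2)*x)) / (1 - Real.exp (-π))) := by
          apply mul_le_mul_of_nonneg_left _ (by positivity)
          exact div_le_div_of_nonneg_right hx1 hd.le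
      _ = K * Real.exp (-(α*π/2) * x) := by
          rw [hK, show (t^2/2) * Real.exp (-(α*π*x)) *
            (((1 + 2/(α*π)) * Real.exp ((α*π/2)*x)) / (1 - Real.exp (-π)))
            = (t^2/2 * (1 + 2/(α*π)) / (1 - Real.exp (-π)))
              * (Real.exp (-(α*π*x)) * Real.exp ((α*π/2)*x)) by ring,
            ← Real.exp_add, show -(α*π*x) + (α*π/2)*x = -(α*π/2)*x by ring]
  have hFint : IntegrableOn (fun x : ℝ => (Real.cos (t * x) - 1) *
      (Real.exp (-(α * π * x)) / (x * (1 - Real.exp (-(π * x)))))) (Set.Ioi 0) := by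
    refine Integrable.mono'
      ((exp_neg_integrableOn_Ioi 0 (show (0:ℝ) < α*π/2 by positivity)).const_mul K) ?_ ?_
    · refine ((Continuous.continuousOn (by fun_prop)).mul
        (ContinuousOn.div (Continuous.continuousOn (by fun_prop))
          (Continuous.continuousOn (by fun_prop)) ?_)).aestronglyMeasurable measurableSet_Ioi
      intro x hx
      have hx0 : (0:ℝ) < x := hx
      have h2 : Real.exp (-(π*x)) < 1 := Real.exp_lt_one_iff.mpr (by nlinarith)
      exact ne_of_gt (mul_pos hx0 (by linarith))
    · filter_upwards [MeasureTheory.ae_restrict_mem measurableSet_Ioi] with x hx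
      exact hFb x hx
  refine ⟨hFint, ?_⟩
  set β := t / π with hβ
  have hc : ∀ n : ℕ, (0:ℝ) < (α+n)*π := fun n => by positivity
  have hint : ∀ n : ℕ, Integrable
      (fun x : ℝ => (Real.cos (t*x) - 1) * (Real.exp (-(((α+n)*π)*x)) / x))
      (MeasureTheory.volume.restrict (Set.Ioi 0)) := fun n => term_integrable (hc n) t
  have hnormsum : Summable (fun n : ℕ =>
      ∫ x in Set.Ioi (0:ℝ), ‖(Real.cos (t*x) - 1) * (Real.exp (-(((α+n)*π)*x)) / x)‖) := by
    apply Summable.congr ?_ (fun n => (term_norm_integral (hc n) t).symm)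
    apply Summable.of_nonneg_of_le ?_ ?_ ((summable_inv_sq_shift hα).mul_left (t^2/(2*π^2)))
    · intro n
      have h2 := Real.log_le_log (show (0:ℝ) < ((α+n)*π)^2 by positivity)
        (show (((α+n)*π):ℝ)^2 ≤ ((α+n)*π)^2+t^2 by nlinarith [sq_nonneg t])
      linarith
    · intro n
      have hC : (0:ℝ) < ((α+n)*π)^2 := by positivity
      have h1 : Real.log (((α+n)*π)^2+t^2) - Real.log (((α+n)*π)^2)
          = Real.log ((((α+n)*π)^2+t^2)/(((α+n)*π)^2)) :=
        (Real.log_div (by positivity) (by positivity)).symm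
      have hn0 : (α + (n:ℝ)) ≠ 0 := ne_of_gt (by positivity)
      have h2 := Real.log_le_sub_one_of_pos
        (show (0:ℝ) < (((α+n)*π)^2+t^2)/(((α+n)*π)^2) by positivity)
      have h3 : ((((α+n)*π)^2+t^2)/(((α+n)*π)^2)) - 1 = t^2 / (((α+n))^2 * π^2) := by
        rw [div_sub_one (ne_of_gt hC), add_sub_cancel_left]
        congr 1
        ring
      have h4 : t^2/(2*π^2) * (1/(α+n)^2) = (1/2) * (t^2 / (((α+n))^2 * π^2)) := by
        rw [div_mul_div_comm, mul_one, one_div_mul_eq_div, div_div,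
          div_eq_div_iff (by positivity) (by positivity)]
        ring
      rw [h4]
      rw [h1] at *
      linarith
  have hswap := MeasureTheory.integral_tsum_of_summable_integral_norm hint hnormsum
  have hpt : Set.EqOn
      (fun x : ℝ => ∑' n : ℕ, (Real.cos (t*x) - 1) * (Real.exp (-(((α+n)*π)*x)) / x))
      (fun x : ℝ => (Real.cos (t * x) - 1) *
        (Real.exp (-(α * π * x)) / (x * (1 - Real.exp (-(π * x)))))) (Set.Ioi 0) := by
    intro x hx
    have hx0 : (0:ℝ) < x := hx
    have hr1 : Real.exp (-(π*x)) < 1 := Real.exp_lt_one_iff.mpr (by nlinarith)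
    have hr0 : (0:ℝ) ≤ Real.exp (-(π*x)) := (Real.exp_pos _).le
    have hgeo : ∑' n : ℕ, Real.exp (-(((α+n)*π)*x))
        = Real.exp (-(α*π*x)) * (1 - Real.exp (-(π*x)))⁻¹ := by
      have h1 : ∀ n : ℕ, Real.exp (-(((α+n)*π)*x))
          = Real.exp (-(α*π*x)) * (Real.exp (-(π*x)))^n := by
        intro n
        rw [← Real.exp_nat_mul, ← Real.exp_add]
        congr 1
        push_cast
        ring
      rw [tsum_congr h1, tsum_mul_left, tsum_geometric_of_lt_one hr0 hr1]
    simp only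
    rw [show (fun n : ℕ => (Real.cos (t*x) - 1) * (Real.exp (-(((α+n)*π)*x)) / x))
        = fun n : ℕ => (Real.cos (t*x) - 1) / x * Real.exp (-(((α+n)*π)*x)) from
      funext fun n => by ring]
    rw [tsum_mul_left, hgeo]
    field_simp
  have hvals : ∀ n : ℕ,
      (∫ x in Set.Ioi (0:ℝ), (Real.cos (t*x) - 1) * (Real.exp (-(((α+n)*π)*x)) / x))
        = -(1/2) * (Real.log ((α+n)^2+β^2) - Real.log ((α+n)^2)) := by
    intro n
    rw [Gval (hc n) t]
    have hXpos : (0:ℝ) < (α+n)^2+β^2 := by positivity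
    have hYpos : (0:ℝ) < ((α+n):ℝ)^2 := by positivity
    have e1 : ((α+n)*π)^2 + t^2 = π^2 * ((α+n)^2+β^2) := by
      rw [hβ]
      field_simp
    have e2 : ((α+n)*π)^2 = π^2 * ((α+n):ℝ)^2 := by ring
    rw [e1, e2, Real.log_mul (by positivity) (ne_of_gt hXpos),
      Real.log_mul (by positivity) (ne_of_gt hYpos)]
    ring
  calc (∫ x in Set.Ioi (0:ℝ), (Real.cos (t * x) - 1) *
        (Real.exp (-(α * π * x)) / (x * (1 - Real.exp (-(π * x))))))
      = ∫ x in Set.Ioi (0:ℝ), ∑' n : ℕ,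
          (Real.cos (t*x) - 1) * (Real.exp (-(((α+n)*π)*x)) / x) :=
        (MeasureTheory.setIntegral_congr_fun measurableSet_Ioi hpt).symm
    _ = ∑' n : ℕ, ∫ x in Set.Ioi (0:ℝ),
          (Real.cos (t*x) - 1) * (Real.exp (-(((α+n)*π)*x)) / x) := hswap.symm
    _ = ∑' n : ℕ, -(1/2) * (Real.log ((α+n)^2+β^2) - Real.log ((α+n)^2)) := tsum_congr hvals
    _ = Real.log (‖Complex.Gamma ((α:ℂ) + (β:ℂ)*Complex.I)‖)
        - Real.log (Real.Gamma α) := (gamma_hasSum hα β).tsum_eq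
end

section
/- For every real α > 0 and every real t, the integral ∫_{−∞}^{∞} e^{its}·e^{αs}·(1 + e^s)^{−2α} ds converges and equals Γ(α + it)·Γ(α − it)/Γ(2α), where Γ is the complex Gamma function; in particular its value is the nonnegative real number |Γ(α + it)|²/Γ(2α). -/
open Real MeasureTheory

private noncomputable def lgt (s : ℝ) : ℝ := Real.exp s / (1 + Real.exp s)

private lemma lgt_hasDeriv (s : ℝ) :
    HasDerivAt lgt (Real.exp s / (1 + Real.exp s) ^ 2) s := by
  have h0 : (0:ℝ) < 1 + Real.exp s := by positivity
  have : HasDerivAt lgt ((Real.exp s * (1 + Real.exp s) - Real.exp s * (0 + Real.exp s)) / (1 + Real.exp s) ^ 2) s := (Real.hasDerivAt_exp s).div ((hasDerivAt_const s (1:ℝ)).add (Real.hasDerivAt_exp s)) h0.ne'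
  convert this using 1
  ring

private lemma lgt_mono : StrictMono lgt := by
  intro a b hab
  have ha : (0:ℝ) < 1 + Real.exp a := by positivity
  have hb : (0:ℝ) < 1 + Real.exp b := by positivity
  have h : Real.exp a < Real.exp b := Real.exp_lt_exp.2 hab
  rw [lgt, lgt, div_lt_div_iff₀ ha hb]
  nlinarith

private lemma lgt_range : Set.range lgt = Set.Ioo 0 1 := by
  ext y
  constructor
  · rintro ⟨s, rfl⟩
    have h0 : (0:ℝ) < 1 + Real.exp s := by positivity
    constructor
    · exact div_pos (Real.exp_pos s) h0
    · rw [lgt, div_lt_one h0]; linarith [Real.exp_pos s]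
  · rintro ⟨hy0, hy1⟩
    refine ⟨Real.log (y / (1 - y)), ?_⟩
    have h1y : (0:ℝ) < 1 - y := by linarith
    have : Real.exp (Real.log (y / (1 - y))) = y / (1 - y) :=
      Real.exp_log (by positivity)
    rw [lgt, this]
    field_simp
    ring

/-- The key pointwise identity. -/
private lemma key (α t s : ℝ) :
    (|Real.exp s / (1 + Real.exp s) ^ 2| : ℝ) •
      (((lgt s : ℂ)) ^ (((α : ℂ) + (t : ℂ) * Complex.I) - 1) *
        ((1 : ℂ) - (lgt s : ℂ)) ^ (((α : ℂ) - (t : ℂ) * Complex.I) - 1)) =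
    Complex.exp ((t : ℂ) * (s : ℂ) * Complex.I) *
      ((Real.exp (α * s) * (1 + Real.exp s) ^ (-(2 * α)) : ℝ) : ℂ) := by
  have h0 : (0:ℝ) < 1 + Real.exp s := by positivity
  set L : ℝ := Real.log (1 + Real.exp s) with hL
  have hx : (0:ℝ) < lgt s := div_pos (Real.exp_pos s) h0
  have hx1 : lgt s < 1 := by rw [lgt, div_lt_one h0]; linarith [Real.exp_pos s]
  have hlog : Real.log (lgt s) = s - L := by
    rw [lgt, Real.log_div (Real.exp_pos s).ne' h0.ne', Real.log_exp]
  have h1x : (1:ℝ) - lgt s = 1 / (1 + Real.exp s) := by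
    rw [lgt]; field_simp; ring
  have hlog1 : Real.log (1 - lgt s) = -L := by
    rw [h1x, Real.log_div one_ne_zero h0.ne', Real.log_one]; ring
  -- rewrite cpows as exponentials
  have c1 : ((lgt s : ℂ)) ^ (((α : ℂ) + (t : ℂ) * Complex.I) - 1)
      = Complex.exp ((((α : ℂ) + (t : ℂ) * Complex.I) - 1) * (s - L)) := by
    rw [Complex.cpow_def_of_ne_zero (by exact_mod_cast hx.ne'),
      ← Complex.ofReal_log hx.le, hlog, mul_comm]
    push_cast
    ring_nf
  have c2 : ((1 : ℂ) - (lgt s : ℂ)) ^ (((α : ℂ) - (t : ℂ) * Complex.I) - 1)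
      = Complex.exp ((((α : ℂ) - (t : ℂ) * Complex.I) - 1) * (-L)) := by
    have h1x' : (1:ℂ) - (lgt s : ℂ) = ((1 - lgt s : ℝ) : ℂ) := by push_cast; ring
    rw [h1x', Complex.cpow_def_of_ne_zero (by
      rw [Ne, Complex.ofReal_eq_zero]; exact (by linarith : (0:ℝ) < 1 - lgt s).ne'),
      ← Complex.ofReal_log (by linarith : (0:ℝ) ≤ 1 - lgt s), hlog1, mul_comm]
    push_cast
    ring_nf
  have heL : Real.exp L = 1 + Real.exp s := Real.exp_log h0
  have hsc : (|Real.exp s / (1 + Real.exp s) ^ 2| : ℝ) = Real.exp (s - 2 * L) := by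
    rw [abs_of_pos (by positivity), show s - 2*L = s - (L + L) by ring, Real.exp_sub,
      Real.exp_add, heL]
    ring
  have hrpow : (1 + Real.exp s) ^ (-(2 * α)) = Real.exp (-(2*α) * L) := by
    rw [Real.rpow_def_of_pos h0, ← hL, mul_comm]
  rw [hsc, c1, c2, hrpow]
  rw [Complex.real_smul]
  push_cast [Complex.ofReal_exp]
  rw [← Complex.exp_add, ← Complex.exp_add, ← Complex.exp_add, ← Complex.exp_add]
  congr 1
  ring

/-- for every real `α > 0` and real `t`, the integral
`∫_{−∞}^{∞} e^{its}·e^{αs}·(1 + e^s)^{−2α} ds` converges and equals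
`Γ(α + it)·Γ(α − it)/Γ(2α)`, where `Γ` is the complex Gamma function; in particular its
value is the nonnegative real number `|Γ(α + it)|²/Γ(2α)`. -/
theorem generalized_logistic_charfun (α : ℝ) (hα : 0 < α) (t : ℝ) :
    Integrable (fun s : ℝ =>
      Complex.exp ((t : ℂ) * (s : ℂ) * Complex.I) *
        ((Real.exp (α * s) * (1 + Real.exp s) ^ (-(2 * α)) : ℝ) : ℂ)) ∧
    (∫ s : ℝ, Complex.exp ((t : ℂ) * (s : ℂ) * Complex.I) *
        ((Real.exp (α * s) * (1 + Real.exp s) ^ (-(2 * α)) : ℝ) : ℂ))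
      = Complex.Gamma ((α : ℂ) + (t : ℂ) * Complex.I) *
          Complex.Gamma ((α : ℂ) - (t : ℂ) * Complex.I) / Complex.Gamma (2 * (α : ℂ)) ∧
    Complex.Gamma ((α : ℂ) + (t : ℂ) * Complex.I) *
        Complex.Gamma ((α : ℂ) - (t : ℂ) * Complex.I) / Complex.Gamma (2 * (α : ℂ))
      = ((‖Complex.Gamma ((α : ℂ) + (t : ℂ) * Complex.I)‖ ^ 2
            / Real.Gamma (2 * α) : ℝ) : ℂ) ∧
    0 ≤ ‖Complex.Gamma ((α : ℂ) + (t : ℂ) * Complex.I)‖ ^ 2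
          / Real.Gamma (2 * α) := by
  set a : ℂ := (α : ℂ) + (t : ℂ) * Complex.I with ha
  set b : ℂ := (α : ℂ) - (t : ℂ) * Complex.I with hb
  have hare : 0 < a.re := by simp [ha, hα]
  have hbre : 0 < b.re := by simp [hb, hα]
  have hab : a + b = 2 * (α : ℂ) := by rw [ha, hb]; ring
  set g : ℝ → ℂ := fun x => (x : ℂ) ^ (a - 1) * ((1 : ℂ) - (x : ℂ)) ^ (b - 1) with hg
  have hderiv : ∀ x ∈ (Set.univ : Set ℝ),
      HasDerivWithinAt lgt (Real.exp x / (1 + Real.exp x) ^ 2) Set.univ x :=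
    fun x _ => (lgt_hasDeriv x).hasDerivWithinAt
  have hinj : Set.InjOn lgt Set.univ := lgt_mono.injective.injOn
  have himg : lgt '' Set.univ = Set.Ioo 0 1 := by
    rw [Set.image_univ, lgt_range]
  -- integrability of beta integrand on Ioo 0 1
  have hbeta_int : IntegrableOn g (Set.Ioo 0 1) := by
    have := (Complex.betaIntegral_convergent hare hbre).1
    rw [hg]
    exact (this.mono_set Set.Ioo_subset_Ioc_self)
  -- transfer
  have hkey : ∀ s : ℝ, |Real.exp s / (1 + Real.exp s) ^ 2| • g (lgt s)
      = Complex.exp ((t : ℂ) * (s : ℂ) * Complex.I) *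
        ((Real.exp (α * s) * (1 + Real.exp s) ^ (-(2 * α)) : ℝ) : ℂ) :=
    fun s => key α t s
  have hint : Integrable (fun s : ℝ =>
      Complex.exp ((t : ℂ) * (s : ℂ) * Complex.I) *
        ((Real.exp (α * s) * (1 + Real.exp s) ^ (-(2 * α)) : ℝ) : ℂ)) := by
    have := (integrableOn_image_iff_integrableOn_abs_deriv_smul MeasurableSet.univ
      hderiv hinj g).1 (by rwa [himg])
    rw [integrableOn_univ] at this
    exact this.congr (ae_of_all _ hkey)
  have hchange : (∫ s : ℝ, Complex.exp ((t : ℂ) * (s : ℂ) * Complex.I) *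
        ((Real.exp (α * s) * (1 + Real.exp s) ^ (-(2 * α)) : ℝ) : ℂ))
      = Complex.betaIntegral a b := by
    have h1 := integral_image_eq_integral_abs_deriv_smul MeasurableSet.univ hderiv hinj g
    rw [himg] at h1
    rw [show (volume : Measure ℝ).restrict Set.univ = volume from Measure.restrict_univ] at h1
    rw [show (∫ s : ℝ, Complex.exp ((t : ℂ) * (s : ℂ) * Complex.I) *
        ((Real.exp (α * s) * (1 + Real.exp s) ^ (-(2 * α)) : ℝ) : ℂ))
        = ∫ s : ℝ, |Real.exp s / (1 + Real.exp s) ^ 2| • g (lgt s) from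
        integral_congr_ae (ae_of_all _ (fun s => (hkey s).symm)), ← h1]
    rw [Complex.betaIntegral, intervalIntegral.integral_of_le zero_le_one,
      ← MeasureTheory.integral_Ioc_eq_integral_Ioo]
  have hGamma2 : Complex.Gamma (2 * (α : ℂ)) ≠ 0 := by
    rw [show (2 : ℂ) * (α : ℂ) = ((2 * α : ℝ) : ℂ) by push_cast; ring, Complex.Gamma_ofReal]
    exact_mod_cast (Real.Gamma_pos_of_pos (by linarith)).ne'
  have hbeta : Complex.betaIntegral a b
      = Complex.Gamma a * Complex.Gamma b / Complex.Gamma (2 * (α : ℂ)) := by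
    rw [← hab, eq_div_iff (hab ▸ hGamma2), mul_comm (Complex.betaIntegral a b)]
    exact (Complex.Gamma_mul_Gamma_eq_betaIntegral hare hbre).symm
  have hconj : Complex.Gamma b = (starRingEnd ℂ) (Complex.Gamma a) := by
    rw [← Complex.Gamma_conj]
    congr 1
    rw [ha, hb]
    simp [Complex.ext_iff]
  have hreal : Complex.Gamma a * Complex.Gamma b / Complex.Gamma (2 * (α : ℂ))
      = ((‖Complex.Gamma a‖ ^ 2 / Real.Gamma (2 * α) : ℝ) : ℂ) := by
    rw [hconj, Complex.mul_conj, show (2 : ℂ) * (α : ℂ) = ((2 * α : ℝ) : ℂ) by push_cast; ring,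
      Complex.Gamma_ofReal, Complex.normSq_eq_norm_sq]
    push_cast
    ring
  exact ⟨hint, by rw [hchange, hbeta], hreal,
    div_nonneg (sq_nonneg _) (Real.Gamma_pos_of_pos (by linarith)).le⟩
end
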